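/- arXiv:2307.08940 — 6 statements merged into one kernel-verified Lean document; each statement's English description precedes it below -/
import Mathlib

section
/- Let p be a prime and r an integer. Then there exists a unique continuous function ψ : ℤ_p → ℚ_p such that for every positive integer n, ψ(n) = ∑_{0<k<n, p∤k} 1/k^{r+1} (the sum ranging over integers k with 0 < k < n not divisible by p). In other words, the p-adic polygamma function ψ_p^{(r)}(z) = lim_{n→z, n∈ℤ_{>0}} ∑_{0<k<n, p∤k} k^{−(r+1)} is a well-defined continuous function on ℤ_p. -/
open Finset Filter IsUltrametricDist

namespace PadicPolygamma

variable (p : ℕ) [hp : Fact p.Prime] (s : ℤ)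

/-- The summand: `k ^ s` if `p ∤ k`, else `0`. -/
noncomputable def t (k : ℕ) : ℚ_[p] := if p ∣ k then 0 else (k : ℚ_[p]) ^ s

/-- Partial sums on the natural numbers. -/
noncomputable def f (n : ℕ) : ℚ_[p] := ∑ k ∈ Finset.range n, t p s k

lemma norm_natCast_eq_one {k : ℕ} (hk : ¬ p ∣ k) : ‖(k : ℚ_[p])‖ = 1 := by
  have h1 : ‖((k : ℤ) : ℚ_[p])‖ ≤ 1 := Padic.norm_int_le_one _
  have h2 : ¬ ‖((k : ℤ) : ℚ_[p])‖ < 1 := by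
    rw [Padic.norm_intCast_lt_one_iff]
    exact_mod_cast hk
  push_cast at h1 h2
  exact le_antisymm h1 (not_lt.mp h2)

lemma norm_pow_sub_pow_le (u v : ℚ_[p]) (hu : ‖u‖ = 1) (hv : ‖v‖ = 1) (n : ℕ) :
    ‖u ^ n - v ^ n‖ ≤ ‖u - v‖ := by
  induction n with
  | zero => simpa using norm_nonneg _
  | succ n ih =>
    have h : u ^ (n + 1) - v ^ (n + 1) = u ^ n * (u - v) + v * (u ^ n - v ^ n) := by ring
    rw [h]
    refine (Padic.nonarchimedean _ _).trans (max_le ?_ ?_)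
    · rw [norm_mul, norm_pow, hu, one_pow, one_mul]
    · rw [norm_mul, hv, one_mul]; exact ih

lemma norm_zpow_sub_zpow_le (m : ℤ) (u v : ℚ_[p]) (hu : ‖u‖ = 1) (hv : ‖v‖ = 1) :
    ‖u ^ m - v ^ m‖ ≤ ‖u - v‖ := by
  have hu0 : u ≠ 0 := by intro h; rw [h, norm_zero] at hu; norm_num at hu
  have hv0 : v ≠ 0 := by intro h; rw [h, norm_zero] at hv; norm_num at hv
  rcases m with n | n
  · simpa using norm_pow_sub_pow_le p u v hu hv n
  · rw [zpow_negSucc, zpow_negSucc,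
      inv_sub_inv (pow_ne_zero _ hu0) (pow_ne_zero _ hv0), norm_div, norm_mul,
      norm_pow, norm_pow, hu, hv, one_pow, mul_one, div_one, norm_sub_rev]
    exact norm_pow_sub_pow_le p u v hu hv (n + 1)

lemma norm_natCast_sub_le {a b M : ℕ} (h : a ≡ b [MOD p ^ M]) :
    ‖(a : ℚ_[p]) - (b : ℚ_[p])‖ ≤ (p : ℝ) ^ (-(M : ℤ)) := by
  have hdvd : ((p : ℤ) ^ M) ∣ (a : ℤ) - (b : ℤ) := by
    have := h.symm.dvd
    simpa using this
  have := (Padic.norm_int_le_pow_iff_dvd ((a : ℤ) - b) M).2 (by exact_mod_cast hdvd)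
  push_cast at this
  exact this

lemma t_congr {a b M : ℕ} (hM : 1 ≤ M) (h : a ≡ b [MOD p ^ M]) :
    ‖t p s a - t p s b‖ ≤ (p : ℝ) ^ (-(M : ℤ)) := by
  have hppos : (0 : ℝ) < (p : ℝ) := by exact_mod_cast hp.out.pos
  have hpos : (0 : ℝ) < (p : ℝ) ^ (-(M : ℤ)) := zpow_pos hppos _
  have hmod : a ≡ b [MOD p] := h.of_dvd (dvd_pow_self p (by omega))
  have hdvd : p ∣ a ↔ p ∣ b := by
    constructor <;> intro hd
    · exact (Nat.modEq_zero_iff_dvd).1 ((hmod.symm.trans (Nat.modEq_zero_iff_dvd.2 hd)))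
    · exact (Nat.modEq_zero_iff_dvd).1 ((hmod.trans (Nat.modEq_zero_iff_dvd.2 hd)))
  by_cases hd : p ∣ a
  · rw [t, t, if_pos hd, if_pos (hdvd.1 hd), sub_zero, norm_zero]
    exact le_of_lt hpos
  · have hdb : ¬ p ∣ b := fun hb => hd (hdvd.2 hb)
    rw [t, t, if_neg hd, if_neg hdb]
    exact (norm_zpow_sub_zpow_le p s (a : ℚ_[p]) (b : ℚ_[p])
      (norm_natCast_eq_one p hd) (norm_natCast_eq_one p hdb)).trans
      (norm_natCast_sub_le p h)

/-- Block sums. -/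
noncomputable def B (n M : ℕ) : ℚ_[p] := ∑ j ∈ Finset.range (p ^ M), t p s (n + j)

lemma f_add_pow (n M : ℕ) : f p s (n + p ^ M) = f p s n + B p s n M := by
  rw [f, f, B, Finset.sum_range_add]

lemma B_succ (n M : ℕ) :
    B p s (n + 1) M = B p s n M + t p s (n + p ^ M) - t p s n := by
  have h1 : ∑ j ∈ range (p ^ M + 1), t p s (n + j)
      = B p s n M + t p s (n + p ^ M) := Finset.sum_range_succ _ _
  have h2 : ∑ j ∈ range (p ^ M + 1), t p s (n + j)
      = B p s (n + 1) M + t p s n := by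
    rw [Finset.sum_range_succ', B, Nat.add_zero]
    congr 1
    exact Finset.sum_congr rfl fun j _ => by
      rw [show n + (j + 1) = n + 1 + j by omega]
  linear_combination h1 - h2

lemma norm_B_sub_B_le {M : ℕ} (hM : 1 ≤ M) (n : ℕ) :
    ‖B p s n M - B p s 0 M‖ ≤ (p : ℝ) ^ (-(M : ℤ)) := by
  have hppos : (0 : ℝ) < (p : ℝ) := by exact_mod_cast hp.out.pos
  have hpos : (0 : ℝ) < (p : ℝ) ^ (-(M : ℤ)) := zpow_pos hppos _
  induction n with
  | zero => simpa using le_of_lt hpos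
  | succ n ih =>
    have key : ‖t p s (n + p ^ M) - t p s n‖ ≤ (p : ℝ) ^ (-(M : ℤ)) :=
      t_congr p s hM (show (n + p ^ M) % (p ^ M) = n % (p ^ M) from Nat.add_mod_right _ _)
    have h : B p s (n + 1) M - B p s 0 M
        = (B p s n M - B p s 0 M) + (t p s (n + p ^ M) - t p s n) := by
      rw [B_succ]; ring
    rw [h]
    exact (Padic.nonarchimedean _ _).trans (max_le ih key)

lemma reindex {M : ℕ} {g : ℕ} (hg : Nat.Coprime g (p ^ M)) :
    ∑ k ∈ range (p ^ M), t p s ((g * k) % (p ^ M)) = B p s 0 M := by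
  have hNpos : 0 < p ^ M := pow_pos hp.out.pos _
  have hinj : ∀ x ∈ range (p ^ M), ∀ y ∈ range (p ^ M),
      (g * x) % (p ^ M) = (g * y) % (p ^ M) → x = y := by
    intro a ha b hb hab
    rw [Finset.mem_range] at ha hb
    have hmod : a ≡ b [MOD p ^ M] :=
      Nat.ModEq.cancel_left_of_coprime (by rwa [Nat.coprime_comm] at hg) hab
    rw [Nat.ModEq] at hmod
    rwa [Nat.mod_eq_of_lt ha, Nat.mod_eq_of_lt hb] at hmod
  have himg : (range (p ^ M)).image (fun k => (g * k) % (p ^ M)) = range (p ^ M) := by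
    apply Finset.eq_of_subset_of_card_le
    · intro x hx
      rw [Finset.mem_image] at hx
      obtain ⟨k, _, rfl⟩ := hx
      exact Finset.mem_range.2 (Nat.mod_lt _ hNpos)
    · rw [Finset.card_image_of_injOn fun a ha b hb => hinj a ha b hb]
  calc ∑ k ∈ range (p ^ M), t p s ((g * k) % (p ^ M))
      = ∑ j ∈ (range (p ^ M)).image (fun k => (g * k) % (p ^ M)), t p s j :=
        (Finset.sum_image hinj).symm
    _ = ∑ j ∈ range (p ^ M), t p s j := by rw [himg]
    _ = B p s 0 M := by rw [B]; exact Finset.sum_congr rfl fun j _ => by rw [Nat.zero_add]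

lemma norm_B0_le : ∃ C : ℝ, 0 < C ∧
    ∀ M : ℕ, 1 ≤ M → ‖B p s 0 M‖ ≤ C * (p : ℝ) ^ (-(M : ℤ)) := by
  have hppos : (0 : ℝ) < (p : ℝ) := by exact_mod_cast hp.out.pos
  have hp0 : (p : ℝ) ≠ 0 := ne_of_gt hppos
  by_cases hs : s = 0
  · -- the sum counts integers `< p^M` prime to `p`
    subst hs
    refine ⟨p, hppos, fun M hM => ?_⟩
    obtain ⟨M', rfl⟩ : ∃ M', M = M' + 1 := ⟨M - 1, by omega⟩
    have hinjp : Function.Injective (fun j : ℕ => p * j) :=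
      fun a b h => Nat.eq_of_mul_eq_mul_left hp.out.pos h
    have hcount : (range (p ^ (M' + 1))).filter (fun k => p ∣ k)
        = (range (p ^ M')).image (fun j => p * j) := by
      ext k
      simp only [Finset.mem_filter, Finset.mem_range, Finset.mem_image]
      constructor
      · rintro ⟨hk, j, rfl⟩
        refine ⟨j, ?_, rfl⟩
        rw [pow_succ, mul_comm (p ^ M') p] at hk
        exact lt_of_mul_lt_mul_left hk (Nat.zero_le _)
      · rintro ⟨j, hj, rfl⟩
        refine ⟨?_, ⟨j, rfl⟩⟩
        rw [pow_succ, mul_comm (p ^ M') p]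
        exact (mul_lt_mul_iff_right₀ hp.out.pos).2 hj
    have hcard : #((range (p ^ (M' + 1))).filter (fun j => ¬ p ∣ j))
        = p ^ (M' + 1) - p ^ M' := by
      have h2 : #((range (p ^ (M' + 1))).filter (fun k => p ∣ k))
          + #((range (p ^ (M' + 1))).filter (fun j => ¬ p ∣ j)) = p ^ (M' + 1) := by
        simpa using Finset.card_filter_add_card_filter_not
          (s := range (p ^ (M' + 1))) (p := fun k => p ∣ k)
      rw [hcount, Finset.card_image_of_injective _ hinjp, Finset.card_range] at h2
      omega
    have hval : B p 0 0 (M' + 1) = ((p ^ (M' + 1) - p ^ M' : ℕ) : ℚ_[p]) := by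
      rw [B]
      have hterm : ∀ j ∈ range (p ^ (M' + 1)), t p 0 (0 + j)
          = if ¬ p ∣ j then (1 : ℚ_[p]) else 0 := by
        intro j _
        rw [Nat.zero_add, t]
        by_cases h : p ∣ j <;> simp [h]
      rw [Finset.sum_congr rfl hterm, Finset.sum_boole, hcard]
    rw [hval]
    have hle : p ^ M' ≤ p ^ (M' + 1) := Nat.pow_le_pow_right hp.out.pos (by omega)
    have hcast : ((p ^ (M' + 1) - p ^ M' : ℕ) : ℚ_[p])
        = (p : ℚ_[p]) ^ M' * ((p : ℚ_[p]) - 1) := by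
      push_cast [Nat.cast_sub hle]
      ring
    rw [hcast, norm_mul]
    have h1 : ‖(p : ℚ_[p]) ^ M'‖ = (p : ℝ) ^ (-(M' : ℤ)) := Padic.norm_p_pow M'
    have h2 : ‖(p : ℚ_[p]) - 1‖ ≤ 1 := by
      have := Padic.norm_int_le_one (p := p) ((p : ℤ) - 1)
      push_cast at this
      exact this
    calc ‖(p : ℚ_[p]) ^ M'‖ * ‖(p : ℚ_[p]) - 1‖
        ≤ (p : ℝ) ^ (-(M' : ℤ)) * 1 := by
          rw [h1]; exact mul_le_mul_of_nonneg_left h2 (le_of_lt (zpow_pos hppos _))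
      _ = (p : ℝ) * (p : ℝ) ^ (-((M' + 1 : ℕ) : ℤ)) := by
          rw [mul_one, show (-((M' + 1 : ℕ) : ℤ)) = -(M' : ℤ) - 1 by push_cast; ring,
            zpow_sub₀ hp0, zpow_one]
          field_simp
  · -- multiply by `(p+1)^s` and use the reindexing trick
    have hgd : ¬ p ∣ (p + 1) := by
      intro h
      have h1 : p ∣ 1 := (Nat.dvd_add_right (dvd_refl p)).1 h
      have := Nat.le_of_dvd one_pos h1
      have := hp.out.two_le
      omega
    have hone : ((p + 1 : ℕ) : ℚ_[p]) ^ s ≠ 1 := by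
      intro h
      have hb2 : (1 : ℚ) < ((p + 1 : ℕ) : ℚ) := by
        have := hp.out.two_le
        exact_mod_cast by omega
      have hQ : ((((p + 1 : ℕ) : ℚ) ^ s : ℚ) : ℚ_[p]) = ((1 : ℚ) : ℚ_[p]) := by
        rw [Rat.cast_zpow, Rat.cast_one]
        push_cast at h ⊢
        exact h
      have hQ2 : ((p + 1 : ℕ) : ℚ) ^ s = ((p + 1 : ℕ) : ℚ) ^ (0 : ℤ) := by
        rw [zpow_zero]
        exact Rat.cast_injective hQ
      exact hs (zpow_right_injective₀ (by linarith) (ne_of_gt hb2) hQ2)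
    set δ := ‖((p + 1 : ℕ) : ℚ_[p]) ^ s - 1‖ with hδdef
    have hδpos : 0 < δ := norm_pos_iff.2 (sub_ne_zero.2 hone)
    refine ⟨δ⁻¹, inv_pos.2 hδpos, fun M hM => ?_⟩
    have hcop1 : Nat.Coprime (p + 1) p := by
      unfold Nat.Coprime
      rw [add_comm, Nat.gcd_add_self_left, Nat.gcd_one_left]
    have hcop : Nat.Coprime (p + 1) (p ^ M) := hcop1.pow_right _
    have hX : ∑ k ∈ range (p ^ M), t p s ((p + 1) * k)
        = ((p + 1 : ℕ) : ℚ_[p]) ^ s * B p s 0 M := by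
      rw [B, Finset.mul_sum]
      refine Finset.sum_congr rfl fun k _ => ?_
      rw [Nat.zero_add]
      by_cases hk : p ∣ k
      · rw [t, t, if_pos (Dvd.dvd.mul_left hk _), if_pos hk, mul_zero]
      · have hnk : ¬ p ∣ (p + 1) * k := fun h =>
          ((Nat.Prime.dvd_mul hp.out).1 h).elim hgd hk
        rw [t, t, if_neg hnk, if_neg hk, Nat.cast_mul, mul_zpow]
    have hXB : ‖(∑ k ∈ range (p ^ M), t p s ((p + 1) * k)) - B p s 0 M‖
        ≤ (p : ℝ) ^ (-(M : ℤ)) := by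
      conv_lhs => rw [← reindex p s hcop, ← Finset.sum_sub_distrib]
      refine norm_sum_le_of_forall_le_of_nonneg (le_of_lt (zpow_pos hppos _)) fun k _ => ?_
      exact t_congr p s hM ((Nat.mod_modEq _ _).symm)
    have hkey : δ * ‖B p s 0 M‖ ≤ (p : ℝ) ^ (-(M : ℤ)) := by
      rw [hδdef, ← norm_mul, sub_mul, one_mul, ← hX]
      exact hXB
    calc ‖B p s 0 M‖ = δ⁻¹ * (δ * ‖B p s 0 M‖) := by field_simp
      _ ≤ δ⁻¹ * (p : ℝ) ^ (-(M : ℤ)) :=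
          mul_le_mul_of_nonneg_left hkey (le_of_lt (inv_pos.2 hδpos))

lemma norm_B_le : ∃ C : ℝ, 0 < C ∧
    ∀ n M : ℕ, 1 ≤ M → ‖B p s n M‖ ≤ C * (p : ℝ) ^ (-(M : ℤ)) := by
  have hppos : (0 : ℝ) < (p : ℝ) := by exact_mod_cast hp.out.pos
  obtain ⟨C, hC, h0⟩ := norm_B0_le p s
  refine ⟨max C 1, lt_of_lt_of_le hC (le_max_left _ _), fun n M hM => ?_⟩
  have h : B p s n M = (B p s n M - B p s 0 M) + B p s 0 M := by ring
  rw [h]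
  refine (Padic.nonarchimedean _ _).trans (max_le ?_ ?_)
  · exact (norm_B_sub_B_le p s hM n).trans
      (le_mul_of_one_le_left (le_of_lt (zpow_pos hppos _)) (le_max_right _ _))
  · exact (h0 M hM).trans
      (mul_le_mul_of_nonneg_right (le_max_left _ _) (le_of_lt (zpow_pos hppos _)))

lemma norm_f_sub_f_le {C : ℝ}
    (hB : ∀ n M : ℕ, 1 ≤ M → ‖B p s n M‖ ≤ C * (p : ℝ) ^ (-(M : ℤ)))
    {M : ℕ} (hM : 1 ≤ M) (hC : 0 < C) (n j : ℕ) :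
    ‖f p s (n + j * p ^ M) - f p s n‖ ≤ C * (p : ℝ) ^ (-(M : ℤ)) := by
  have hppos : (0 : ℝ) < (p : ℝ) := by exact_mod_cast hp.out.pos
  induction j with
  | zero =>
    have h0 : n + 0 * p ^ M = n := by ring
    rw [h0, sub_self, norm_zero]
    positivity
  | succ j ih =>
    have h1 : n + (j + 1) * p ^ M = (n + j * p ^ M) + p ^ M := by ring
    rw [h1, f_add_pow]
    have h2 : f p s (n + j * p ^ M) + B p s (n + j * p ^ M) M - f p s n
        = (f p s (n + j * p ^ M) - f p s n) + B p s (n + j * p ^ M) M := by ring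
    rw [h2]
    exact (Padic.nonarchimedean _ _).trans (max_le ih (hB _ _ hM))

lemma f_eq (r : ℤ) {n : ℕ} (hn : 0 < n) :
    f p (-(r + 1)) n
      = ∑ k ∈ Finset.Ico 1 n, if p ∣ k then 0 else ((k : ℚ_[p]) ^ (r + 1))⁻¹ := by
  rw [f, Finset.range_eq_Ico, Finset.sum_eq_sum_Ico_succ_bot hn]
  rw [show t p (-(r + 1)) 0 = 0 from if_pos (dvd_zero p), zero_add]
  refine Finset.sum_congr rfl fun k _ => ?_
  rw [t, zpow_neg]

end PadicPolygamma

/-- **Existence and uniqueness of the p-adic polygamma function.**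
For a prime `p` and an integer `r`, there is a unique continuous function
`ψ : ℤ_p → ℚ_p` with `ψ(n) = ∑_{0<k<n, p∤k} 1/k^{r+1}` for every positive integer `n`. -/
theorem stmt_0 (p : ℕ) [Fact p.Prime] (r : ℤ) :
    ∃! ψ : ℤ_[p] → ℚ_[p],
      Continuous ψ ∧
        ∀ n : ℕ, 0 < n →
          ψ (n : ℤ_[p]) =
            ∑ k ∈ Finset.Ico 1 n, if p ∣ k then 0 else ((k : ℚ_[p]) ^ (r + 1))⁻¹ := by
  have hppos : (0 : ℝ) < (p : ℝ) := by exact_mod_cast (Fact.out : p.Prime).pos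
  have hpinv : (p : ℝ)⁻¹ < 1 := by
    rw [inv_lt_one_iff₀]
    right
    exact_mod_cast (Fact.out : p.Prime).one_lt
  set s : ℤ := -(r + 1) with hs
  obtain ⟨C, hC, hB⟩ := PadicPolygamma.norm_B_le p s
  letI U : UniformSpace ℕ := UniformSpace.comap (Nat.cast : ℕ → ℤ_[p]) inferInstance
  letI T : TopologicalSpace ℕ := U.toTopologicalSpace
  have hUI : IsUniformInducing (Nat.cast : ℕ → ℤ_[p]) := ⟨rfl⟩
  have hd : DenseRange (Nat.cast : ℕ → ℤ_[p]) := PadicInt.denseRange_natCast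
  -- uniform continuity of `f`
  have hbasis : (uniformity ℕ).HasBasis (fun ε : ℝ => 0 < ε)
      (fun ε => {x : ℕ × ℕ | ‖((x.1 : ℤ_[p]) - (x.2 : ℤ_[p]))‖ < ε}) := by
    have h2 := (Metric.uniformity_basis_dist (α := ℤ_[p])).comap
      (Prod.map (Nat.cast : ℕ → ℤ_[p]) (Nat.cast : ℕ → ℤ_[p]))
    convert h2 using 2 with ε
    · exact hUI.comap_uniformity.symm
    · ext x; simp [dist_eq_norm]
  have hf : UniformContinuous (PadicPolygamma.f p s) := by
    rw [UniformContinuous]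
    refine (hbasis.tendsto_iff Metric.uniformity_basis_dist).2 fun ε hε => ?_
    obtain ⟨m, hm⟩ := exists_pow_lt_of_lt_one (div_pos hε hC) hpinv
    set M : ℕ := m + 1 with hMdef
    have hp1 : (1 : ℝ) ≤ (p : ℝ) := by
      exact_mod_cast (Fact.out : p.Prime).one_lt.le
    have hMbound : C * (p : ℝ) ^ (-(M : ℤ)) < ε := by
      have h1 : (p : ℝ) ^ (-(M : ℤ)) ≤ (p : ℝ) ^ (-(m : ℤ)) :=
        zpow_le_zpow_right₀ hp1 (by omega)
      have h2 : (p : ℝ) ^ (-(m : ℤ)) = ((p : ℝ)⁻¹) ^ m := by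
        rw [zpow_neg, inv_pow, zpow_natCast]
      calc C * (p : ℝ) ^ (-(M : ℤ)) ≤ C * ((p : ℝ)⁻¹) ^ m := by
            rw [← h2]; exact mul_le_mul_of_nonneg_left h1 hC.le
        _ < C * (ε / C) := mul_lt_mul_of_pos_left hm hC
        _ = ε := by field_simp
    refine ⟨(p : ℝ) ^ (-(M : ℤ)), zpow_pos hppos _, ?_⟩
    rintro ⟨a, b⟩ hx
    simp only [Set.mem_setOf_eq] at hx ⊢
    rw [dist_eq_norm]
    have hdvd : ((p : ℤ) ^ M) ∣ (a : ℤ) - (b : ℤ) := by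
      have hle : ‖(((a : ℤ) - b : ℤ) : ℤ_[p])‖ ≤ (p : ℝ) ^ (-(M : ℤ)) := by
        push_cast
        exact le_of_lt hx
      exact_mod_cast (PadicInt.norm_int_le_pow_iff_dvd).1 hle
    have key : ∀ a b : ℕ, b ≤ a → ((p : ℤ) ^ M) ∣ (a : ℤ) - (b : ℤ) →
        ‖PadicPolygamma.f p s a - PadicPolygamma.f p s b‖ < ε := by
      intro a b hba hdvd
      have hdvd' : p ^ M ∣ a - b := by
        have : ((p ^ M : ℕ) : ℤ) ∣ ((a - b : ℕ) : ℤ) := by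
          push_cast [Nat.cast_sub hba]
          exact_mod_cast hdvd
        exact_mod_cast this
      obtain ⟨j, hj⟩ := hdvd'
      have ha : a = b + j * p ^ M := by
        rw [mul_comm j (p ^ M), ← hj, Nat.add_sub_cancel' hba]
      rw [ha]
      exact lt_of_le_of_lt
        (PadicPolygamma.norm_f_sub_f_le p s hB (by omega) hC b j) hMbound
    rcases le_total b a with h | h
    · exact key a b h hdvd
    · rw [norm_sub_rev]
      exact key b a h (by simpa [neg_sub] using dvd_neg.mpr hdvd)
  set ψ : ℤ_[p] → ℚ_[p] :=
    (hUI.isDenseInducing hd).extend (PadicPolygamma.f p s) with hψdef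
  have hcont : Continuous ψ := (uniformContinuous_uniformly_extend hUI hd hf).continuous
  have hval : ∀ n : ℕ, ψ (n : ℤ_[p]) = PadicPolygamma.f p s n := fun n =>
    uniformly_extend_of_ind hUI hd hf n
  have hvals : ∀ n : ℕ, 0 < n → ψ (n : ℤ_[p])
      = ∑ k ∈ Finset.Ico 1 n, if p ∣ k then 0 else ((k : ℚ_[p]) ^ (r + 1))⁻¹ := by
    intro n hn
    rw [hval n, hs]
    exact PadicPolygamma.f_eq p r hn
  refine ⟨ψ, ⟨hcont, hvals⟩, ?_⟩
  rintro ψ' ⟨hc', hv'⟩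
  have hdense : Dense (Set.range (fun n : ℕ => ((n + 1 : ℕ) : ℤ_[p]))) := by
    have hsub : Set.range (Nat.cast : ℕ → ℤ_[p])
        ⊆ closure (Set.range fun n : ℕ => ((n + 1 : ℕ) : ℤ_[p])) := by
      rintro _ ⟨n, rfl⟩
      rw [Metric.mem_closure_iff]
      intro ε hε
      obtain ⟨m, hm⟩ := exists_pow_lt_of_lt_one hε hpinv
      have h0 : 0 < p ^ m := pow_pos (Fact.out : p.Prime).pos _
      refine ⟨((n + p ^ m : ℕ) : ℤ_[p]), ⟨n + p ^ m - 1, by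
        show (((n + p ^ m - 1) + 1 : ℕ) : ℤ_[p]) = ((n + p ^ m : ℕ) : ℤ_[p])
        congr 1
        omega⟩, ?_⟩
      rw [dist_eq_norm]
      have heq : (n : ℤ_[p]) - ((n + p ^ m : ℕ) : ℤ_[p]) = -((p : ℤ_[p]) ^ m) := by
        push_cast
        ring
      rw [heq, norm_neg, PadicInt.norm_p_pow]
      calc (p : ℝ) ^ (-(m : ℤ)) = ((p : ℝ)⁻¹) ^ m := by
            rw [zpow_neg, inv_pow, zpow_natCast]
        _ < ε := hm
    rw [dense_iff_closure_eq]
    apply Set.eq_univ_of_univ_subset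
    calc Set.univ = closure (Set.range (Nat.cast : ℕ → ℤ_[p])) := hd.closure_range.symm
      _ ⊆ closure (closure (Set.range fun n : ℕ => ((n + 1 : ℕ) : ℤ_[p]))) :=
          closure_mono hsub
      _ = closure (Set.range fun n : ℕ => ((n + 1 : ℕ) : ℤ_[p])) := closure_closure
  have heq : Set.EqOn ψ' ψ (Set.range fun n : ℕ => ((n + 1 : ℕ) : ℤ_[p])) := by
    rintro _ ⟨n, rfl⟩
    rw [hv' (n + 1) n.succ_pos, hvals (n + 1) n.succ_pos]
  exact Continuous.ext_on hdense hc' hcont heq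
end

section
/- Let p be a prime and r an integer. The p-adic polygamma function satisfies: ψ_p^{(r)}(0) = ψ_p^{(r)}(1) = 0; ψ_p^{(r)}(z) = (−1)^r · ψ_p^{(r)}(1−z) for all z ∈ ℤ_p; and ψ_p^{(r)}(z+1) − ψ_p^{(r)}(z) = 1/z^{r+1} if z ∈ ℤ_p^×, while ψ_p^{(r)}(z+1) − ψ_p^{(r)}(z) = 0 if z ∈ pℤ_p. -/
open Finset Filter

section PadicPolygammaHelpers

variable {p : ℕ} [hp : Fact p.Prime]

/-- The partial sums defining the p-adic polygamma function. -/
noncomputable def Sψ (p : ℕ) [Fact p.Prime] (r : ℤ) (n : ℕ) : ℚ_[p] :=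
  ∑ k ∈ Finset.Ico 1 n, if p ∣ k then 0 else ((k : ℚ_[p]) ^ (r + 1))⁻¹

lemma norm_natCast_eq_one {k : ℕ} (h : ¬ p ∣ k) : ‖(k : ℚ_[p])‖ = 1 := by
  have h1 : ‖((k : ℤ) : ℚ_[p])‖ ≤ 1 := Padic.norm_int_le_one _
  have h2 : ¬ ‖((k : ℤ) : ℚ_[p])‖ < 1 := by
    rw [Padic.norm_intCast_lt_one_iff]
    exact_mod_cast h
  push_cast at h1 h2
  linarith [lt_or_eq_of_le h1]

lemma norm_natCast_le_one (n : ℕ) : ‖(n : ℚ_[p])‖ ≤ 1 := by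
  have := Padic.norm_int_le_one (p := p) n
  push_cast at this
  exact this

lemma pow_close {a b : ℚ_[p]} {ε : ℝ} (ha : ‖a‖ = 1) (hb : ‖b‖ = 1)
    (h : ‖a - b‖ ≤ ε) (n : ℕ) : ‖a ^ n - b ^ n‖ ≤ ε := by
  induction n with
  | zero => simp only [pow_zero, sub_self, norm_zero]; exact (norm_nonneg _).trans h
  | succ n ih =>
    have key : a ^ (n + 1) - b ^ (n + 1) = a ^ n * (a - b) + (a ^ n - b ^ n) * b := by ring
    rw [key]
    refine le_trans (Padic.nonarchimedean _ _) (max_le ?_ ?_)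
    · rw [norm_mul, norm_pow, ha, one_pow, one_mul]; exact h
    · rw [norm_mul, hb, mul_one]; exact ih

lemma zpow_close {a b : ℚ_[p]} {ε : ℝ} (ha : ‖a‖ = 1) (hb : ‖b‖ = 1)
    (h : ‖a - b‖ ≤ ε) (s : ℤ) : ‖a ^ s - b ^ s‖ ≤ ε := by
  have ha0 : a ≠ 0 := fun h0 => by simp [h0] at ha
  have hb0 : b ≠ 0 := fun h0 => by simp [h0] at hb
  cases s with
  | ofNat n => simpa using pow_close ha hb h n
  | negSucc n =>
    rw [zpow_negSucc, zpow_negSucc]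
    have key : (a ^ (n + 1))⁻¹ - (b ^ (n + 1))⁻¹
        = (b ^ (n + 1) - a ^ (n + 1)) * (a ^ (n + 1))⁻¹ * (b ^ (n + 1))⁻¹ := by
      field_simp
    rw [key, norm_mul, norm_mul, norm_inv, norm_inv, norm_pow, norm_pow, ha, hb]
    simp only [one_pow, inv_one, mul_one]
    rw [norm_sub_rev]
    exact pow_close ha hb h (n + 1)

lemma neg_one_zpow_inv (s : ℤ) : ((-1 : ℚ_[p]) ^ s)⁻¹ = (-1 : ℚ_[p]) ^ s := by
  refine inv_eq_of_mul_eq_one_right ?_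
  rw [← zpow_add₀ (by norm_num : (-1 : ℚ_[p]) ≠ 0)]
  have h2 : s + s = 2 * s := by ring
  rw [h2, zpow_mul]
  norm_num

lemma norm_p_pow_le (M : ℕ) : ‖((p : ℚ_[p])) ^ M‖ = ((p : ℝ)⁻¹) ^ M := by
  rw [norm_pow, Padic.norm_p]

lemma norm_p_pow_int (M : ℕ) : ‖((p : ℤ_[p])) ^ M‖ = ((p : ℝ)⁻¹) ^ M := by
  rw [norm_pow, PadicInt.norm_p]

lemma Sψ_filter (r : ℤ) (n : ℕ) :
    Sψ p r n = ∑ k ∈ (Finset.Ico 1 n).filter (fun k => ¬ p ∣ k), ((k : ℚ_[p]) ^ (r + 1))⁻¹ := by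
  unfold Sψ
  rw [Finset.sum_filter]
  exact Finset.sum_congr rfl fun k _ => (ite_not _ _ _).symm

lemma S_reflect (r : ℤ) (M n : ℕ) (hM : 1 ≤ M) (h1 : 1 ≤ n) (h2 : n ≤ p ^ M) :
    ‖Sψ p r (p ^ M + 1 - n) - (-1 : ℚ_[p]) ^ (r + 1) * (Sψ p r (p ^ M) - Sψ p r n)‖
      ≤ ((p : ℝ)⁻¹) ^ M := by
  set t : ℕ → ℚ_[p] := fun k => if p ∣ k then 0 else ((k : ℚ_[p]) ^ (r + 1))⁻¹ with ht
  have hsplit : Sψ p r (p ^ M) - Sψ p r n = ∑ k ∈ Ico n (p ^ M), t k := by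
    have := Finset.sum_Ico_consecutive t h1 h2
    unfold Sψ
    rw [← this]; ring
  have hre : Sψ p r (p ^ M + 1 - n) = ∑ k ∈ Ico n (p ^ M), t (p ^ M - k) := by
    unfold Sψ
    rw [show (Finset.Ico 1 (p ^ M + 1 - n)) = (Finset.Ico n (p ^ M)).image (fun k => p ^ M - k) by
      ext j
      simp only [Finset.mem_Ico, Finset.mem_image]
      constructor
      · rintro ⟨hj1, hj2⟩; exact ⟨p ^ M - j, by omega, by omega⟩
      · rintro ⟨k, hk, rfl⟩; omega]
    rw [Finset.sum_image (by intro x hx y hy hxy; simp only [Finset.mem_coe, Finset.coe_Ico, Set.mem_Ico, Finset.mem_Ico] at hx hy hxy; omega)]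
  rw [hsplit, hre, Finset.mul_sum, ← Finset.sum_sub_distrib]
  refine IsUltrametricDist.norm_sum_le_of_forall_le_of_nonneg (by positivity) ?_
  intro k hk
  simp only [Finset.mem_Ico] at hk
  have hk1 : 1 ≤ k := le_trans h1 hk.1
  have hkp : k < p ^ M := hk.2
  have hpM : p ∣ p ^ M := dvd_pow_self p (by omega)
  by_cases hd : p ∣ k
  · have hd' : p ∣ p ^ M - k := Nat.dvd_sub hpM hd
    simp only [ht, if_pos hd, if_pos hd', mul_zero, sub_zero, norm_zero]
    positivity
  · have hd' : ¬ p ∣ p ^ M - k := by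
      intro hcon
      exact hd (by have := Nat.dvd_sub hpM hcon; rwa [Nat.sub_sub_self hkp.le] at this)
    simp only [ht, if_neg hd, if_neg hd']
    have hna : ‖(((p ^ M - k : ℕ) : ℚ_[p]))‖ = 1 := norm_natCast_eq_one hd'
    have hnb : ‖(-(k : ℚ_[p]))‖ = 1 := by rw [norm_neg]; exact norm_natCast_eq_one hd
    have hdiff : ((p ^ M - k : ℕ) : ℚ_[p]) - (-(k : ℚ_[p])) = (p : ℚ_[p]) ^ M := by
      push_cast [Nat.cast_sub hkp.le]
      ring
    have hclose : ‖((p ^ M - k : ℕ) : ℚ_[p]) - (-(k : ℚ_[p]))‖ ≤ ((p : ℝ)⁻¹) ^ M := by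
      rw [hdiff, norm_p_pow_le]
    have hz := zpow_close hna hnb hclose (-(r + 1))
    rw [zpow_neg, zpow_neg] at hz
    have hb : (-(k : ℚ_[p])) ^ (r + 1) = (-1 : ℚ_[p]) ^ (r + 1) * (k : ℚ_[p]) ^ (r + 1) := by
      rw [← mul_zpow]; norm_num
    rwa [hb, mul_inv, neg_one_zpow_inv] at hz

lemma S_mult (r : ℤ) (M : ℕ) (hM : 1 ≤ M) :
    ‖Sψ p r (p ^ M)‖ * ‖1 - ((1 + p : ℚ_[p])) ^ (-(r + 1))‖ ≤ ((p : ℝ)⁻¹) ^ M := by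
  classical
  have hp1 : 1 < p := hp.out.one_lt
  set N := p ^ M with hN
  have hNp : p ∣ N := dvd_pow_self p (by omega)
  have hN1 : 1 < N := lt_of_lt_of_le hp1 (Nat.le_self_pow (by omega) p)
  set A := (Finset.Ico 1 N).filter (fun k => ¬ p ∣ k) with hA
  have hSA : Sψ p r N = ∑ k ∈ A, ((k : ℚ_[p]) ^ (r + 1))⁻¹ := Sψ_filter r N
  set φ : ℕ → ℕ := fun k => ((1 + p) * k) % N with hφ
  have hcp : ¬ p ∣ (1 + p) := by
    intro h
    have h1 : p ∣ 1 := (Nat.dvd_add_right (dvd_refl p)).mp (by rwa [Nat.add_comm] at h)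
    exact absurd (Nat.dvd_one.mp h1) (by omega)
  have hmem : ∀ k ∈ A, φ k ∈ A := by
    intro k hk
    simp only [hA, Finset.mem_filter, Finset.mem_Ico] at hk ⊢
    have hnd : ¬ p ∣ φ k := by
      rw [hφ]
      simp only
      rw [Nat.dvd_mod_iff hNp]
      intro h
      rcases (Nat.Prime.dvd_mul hp.out).mp h with h | h
      · exact hcp h
      · exact hk.2 h
    refine ⟨⟨?_, Nat.mod_lt _ (by omega)⟩, hnd⟩
    rcases Nat.eq_zero_or_pos (φ k) with h | h
    · exact absurd (h ▸ dvd_zero p) hnd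
    · exact h
  have hinj : ∀ x ∈ A, ∀ y ∈ A, φ x = φ y → x = y := by
    intro x hx y hy hxy
    simp only [hA, Finset.mem_filter, Finset.mem_Ico] at hx hy
    have hcop : Nat.gcd N (1 + p) = 1 := by
      have h0 : Nat.Coprime (1 + p) p := by simp [Nat.add_comm]
      exact (h0.pow_right M).symm
    have hmd : (1 + p) * x ≡ (1 + p) * y [MOD N] := hxy
    have hmod : x ≡ y [MOD N] := Nat.ModEq.cancel_left_of_coprime hcop hmd
    have hx' := Nat.mod_eq_of_lt hx.1.2
    have hy' := Nat.mod_eq_of_lt hy.1.2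
    unfold Nat.ModEq at hmod
    omega
  have himg : A.image φ = A :=
    Finset.eq_of_subset_of_card_le (Finset.image_subset_iff.mpr hmem)
      (le_of_eq (Finset.card_image_of_injOn hinj).symm)
  have key : ∑ k ∈ A, (((φ k) : ℚ_[p]) ^ (r + 1))⁻¹
      = ∑ k ∈ A, ((k : ℚ_[p]) ^ (r + 1))⁻¹ := by
    have h := Finset.sum_image (f := fun k : ℕ => ((k : ℚ_[p]) ^ (r + 1))⁻¹) hinj
    rw [himg] at h
    exact h.symm
  set c : ℚ_[p] := (1 + p : ℚ_[p]) ^ (-(r + 1)) with hc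
  have hbound : ‖Sψ p r N - c * Sψ p r N‖ ≤ ((p : ℝ)⁻¹) ^ M := by
    have hEq : Sψ p r N - c * Sψ p r N
        = ∑ k ∈ A, ((((φ k) : ℚ_[p]) ^ (r + 1))⁻¹ - c * ((k : ℚ_[p]) ^ (r + 1))⁻¹) := by
      rw [hSA, Finset.sum_sub_distrib, key, ← Finset.mul_sum]
    rw [hEq]
    refine IsUltrametricDist.norm_sum_le_of_forall_le_of_nonneg (by positivity) ?_
    intro k hk
    simp only [hA, Finset.mem_filter, Finset.mem_Ico] at hk
    have hndk : ¬ p ∣ k := hk.2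
    have hndφ : ¬ p ∣ φ k := by
      have := hmem k (by simp [hA, Finset.mem_filter, Finset.mem_Ico]; exact ⟨⟨hk.1.1, hk.1.2⟩, hk.2⟩)
      simp only [hA, Finset.mem_filter] at this
      exact this.2
    have hndm : ¬ p ∣ (1 + p) * k := fun h => by
      rcases (Nat.Prime.dvd_mul hp.out).mp h with h | h
      · exact hcp h
      · exact hndk h
    have ha : ‖((φ k : ℕ) : ℚ_[p])‖ = 1 := norm_natCast_eq_one hndφ
    have hb : ‖(((1 + p) * k : ℕ) : ℚ_[p])‖ = 1 := norm_natCast_eq_one hndm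
    have hdm : N * ((1 + p) * k / N) + φ k = (1 + p) * k := Nat.div_add_mod _ _
    have hclose : ‖((φ k : ℕ) : ℚ_[p]) - (((1 + p) * k : ℕ) : ℚ_[p])‖ ≤ ((p : ℝ)⁻¹) ^ M := by
      have hcast : ((φ k : ℕ) : ℚ_[p]) - (((1 + p) * k : ℕ) : ℚ_[p])
          = -((p : ℚ_[p]) ^ M * (((1 + p) * k / N : ℕ) : ℚ_[p])) := by
        conv_lhs => rw [← hdm]
        push_cast [hN]
        ring
      rw [hcast, norm_neg, norm_mul, norm_pow, Padic.norm_p]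
      calc ((p:ℝ)⁻¹) ^ M * ‖(((1 + p) * k / N : ℕ) : ℚ_[p])‖
          ≤ ((p:ℝ)⁻¹) ^ M * 1 := by
            refine mul_le_mul_of_nonneg_left (norm_natCast_le_one _) (by positivity)
        _ = ((p:ℝ)⁻¹) ^ M := mul_one _
    have hz := zpow_close ha hb hclose (-(r + 1))
    have hsplit : (((1 + p) * k : ℕ) : ℚ_[p]) ^ (-(r + 1)) = c * (k : ℚ_[p]) ^ (-(r + 1)) := by
      push_cast
      rw [mul_zpow]
    rw [hsplit] at hz
    rw [zpow_neg, zpow_neg] at hz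
    exact hz
  have hfin : Sψ p r N - c * Sψ p r N = (1 - c) * Sψ p r N := by ring
  rw [hfin, norm_mul, mul_comm] at hbound
  exact hbound

lemma S_pow_tendsto (r : ℤ) : Tendsto (fun M => Sψ p r (p ^ M)) atTop (nhds 0) := by
  have hp1 : 1 < p := hp.out.one_lt
  have hlt : (p : ℝ)⁻¹ < 1 := by
    rw [inv_lt_one_iff₀]
    right
    exact_mod_cast hp1
  have hεt : Tendsto (fun M : ℕ => ((p : ℝ)⁻¹) ^ M) atTop (nhds 0) :=
    tendsto_pow_atTop_nhds_zero_of_lt_one (by positivity) hlt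
  by_cases hr : r + 1 = 0
  · have hval : ∀ M : ℕ, 1 ≤ M → ‖Sψ p r (p ^ M)‖ ≤ ((p : ℝ)⁻¹) ^ (M - 1) := by
      intro M hM
      have hAT : ((Finset.Ico 1 (p ^ M)).filter (fun k => ¬ p ∣ k))
          = (Finset.range (p ^ M)).filter ((p ^ M).Coprime ·) := by
        ext k
        simp only [Finset.mem_filter, Finset.mem_Ico, Finset.mem_range,
          Nat.coprime_pow_left_iff (by omega : 0 < M),
          Nat.Prime.coprime_iff_not_dvd hp.out]
        constructor
        · rintro ⟨⟨h1, h2⟩, h3⟩; exact ⟨h2, h3⟩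
        · rintro ⟨h1, h2⟩
          refine ⟨⟨?_, h1⟩, h2⟩
          rcases Nat.eq_zero_or_pos k with rfl | h
          · exact absurd (dvd_zero p) h2
          · exact h
      have hcard : Sψ p r (p ^ M) = (((p ^ M).totient : ℕ) : ℚ_[p]) := by
        rw [Sψ_filter, hAT]
        simp only [hr, zpow_zero, inv_one]
        rw [Finset.sum_const, nsmul_eq_mul, mul_one]
        rfl
      rw [hcard, Nat.totient_prime_pow hp.out (by omega : 0 < M)]
      push_cast [Nat.cast_mul, Nat.cast_pow]
      rw [norm_mul, norm_pow, Padic.norm_p]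
      calc ((p:ℝ)⁻¹) ^ (M - 1) * ‖((p - 1 : ℕ) : ℚ_[p])‖
          ≤ ((p:ℝ)⁻¹) ^ (M - 1) * 1 :=
            mul_le_mul_of_nonneg_left (norm_natCast_le_one _) (by positivity)
        _ = _ := mul_one _
    have hgt : Tendsto (fun M : ℕ => ((p : ℝ)⁻¹) ^ (M - 1)) atTop (nhds 0) :=
      hεt.comp (tendsto_sub_atTop_nat 1)
    refine squeeze_zero_norm' ?_ hgt
    filter_upwards [eventually_ge_atTop 1] with M hM using hval M hM
  · set c : ℚ_[p] := (1 + p : ℚ_[p]) ^ (-(r + 1)) with hc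
    have hcne : c ≠ 1 := by
      intro h
      have hcast : ((1 + p : ℚ) : ℚ_[p]) = (1 + p : ℚ_[p]) := by push_cast; ring
      have hzc : (((1 + p : ℚ) ^ (-(r + 1)) : ℚ) : ℚ_[p]) = c := by
        rw [hc, ← hcast, Rat.cast_zpow]
      have heq1 : ((1 + p : ℚ) ^ (-(r + 1)) : ℚ) = 1 := by
        apply Rat.cast_injective (α := ℚ_[p])
        rw [hzc, h]
        exact Rat.cast_one
      rw [zpow_eq_one_iff_right₀ (by positivity) (by
        have : (1 : ℚ) < 1 + p := by exact_mod_cast Nat.lt_add_of_pos_right hp.out.pos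
        linarith)] at heq1
      omega
    have hδ : 0 < ‖1 - c‖ := by
      rw [norm_pos_iff]
      intro h
      exact hcne (sub_eq_zero.mp h).symm
    have hval : ∀ M : ℕ, 1 ≤ M → ‖Sψ p r (p ^ M)‖ ≤ ((p : ℝ)⁻¹) ^ M * ‖1 - c‖⁻¹ := by
      intro M hM
      have h := S_mult (p := p) r M hM
      rw [← le_div_iff₀ hδ] at h
      rw [div_eq_mul_inv] at h
      exact h
    have hgt : Tendsto (fun M : ℕ => ((p : ℝ)⁻¹) ^ M * ‖1 - c‖⁻¹) atTop (nhds 0) := by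
      have := hεt.mul_const ‖1 - c‖⁻¹
      simpa using this
    refine squeeze_zero_norm' ?_ hgt
    filter_upwards [eventually_ge_atTop 1] with M hM using hval M hM

end PadicPolygammaHelpers

/-- **Basic properties of the p-adic polygamma function** `ψ = ψ_p^{(r)}`:
`ψ(0) = ψ(1) = 0`, the reflection formula `ψ(z) = (-1)^r ψ(1-z)`, and the
difference equation `ψ(z+1) - ψ(z) = z^{-(r+1)}` for `z ∈ ℤ_p^×`, `= 0` for `z ∈ pℤ_p`. -/
theorem stmt_1 (p : ℕ) [Fact p.Prime] (r : ℤ) (ψ : ℤ_[p] → ℚ_[p])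
    (hψc : Continuous ψ)
    (hψ : ∀ n : ℕ, 0 < n →
      ψ (n : ℤ_[p]) = ∑ k ∈ Finset.Ico 1 n, if p ∣ k then 0 else ((k : ℚ_[p]) ^ (r + 1))⁻¹) :
    ψ 0 = 0 ∧ ψ 1 = 0 ∧
      (∀ z : ℤ_[p], ψ z = (-1 : ℚ_[p]) ^ r * ψ (1 - z)) ∧
      (∀ z : ℤ_[p], IsUnit z → ψ (z + 1) - ψ z = ((z : ℚ_[p]) ^ (r + 1))⁻¹) ∧
      (∀ z : ℤ_[p], (p : ℤ_[p]) ∣ z → ψ (z + 1) - ψ z = 0) := by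
  classical
  have hp1 : 1 < p := (Fact.out : p.Prime).one_lt
  have hlt : (p : ℝ)⁻¹ < 1 := by
    rw [inv_lt_one_iff₀]; right; exact_mod_cast hp1
  have hεt : Tendsto (fun m : ℕ => ((p : ℝ)⁻¹) ^ m) atTop (nhds 0) :=
    tendsto_pow_atTop_nhds_zero_of_lt_one (by positivity) hlt
  have hψS : ∀ n : ℕ, 0 < n → ψ (n : ℤ_[p]) = Sψ p r n := hψ
  have happr : ∀ (z : ℤ_[p]) (m : ℕ), ‖z - (z.appr m : ℤ_[p])‖ ≤ ((p : ℝ)⁻¹) ^ m := by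
    intro z m
    have h := (PadicInt.norm_le_pow_iff_mem_span_pow (z - (z.appr m : ℤ_[p])) m).mpr
      (PadicInt.appr_spec m z)
    calc ‖z - (z.appr m : ℤ_[p])‖ ≤ (p : ℝ) ^ (-m : ℤ) := h
      _ = ((p : ℝ)⁻¹) ^ m := by rw [zpow_neg, zpow_natCast, inv_pow]
  have tend_of_close : ∀ (z : ℤ_[p]) (f : ℕ → ℕ),
      (∀ m, ‖z - (f m : ℤ_[p])‖ ≤ ((p : ℝ)⁻¹) ^ m) →
      Tendsto (fun m => ((f m : ℤ_[p]))) atTop (nhds z) := by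
    intro z f h
    have h0 : Tendsto (fun m => z - (f m : ℤ_[p])) atTop (nhds 0) := squeeze_zero_norm h hεt
    have h1 := (tendsto_const_nhds (x := z) (f := (atTop : Filter ℕ))).sub h0
    simpa using h1
  have tendS : ∀ (z : ℤ_[p]) (f : ℕ → ℕ), (∀ m, 1 ≤ f m) →
      Tendsto (fun m => ((f m : ℤ_[p]))) atTop (nhds z) →
      Tendsto (fun m => Sψ p r (f m)) atTop (nhds (ψ z)) := by
    intro z f h1 h2
    have h3 := (hψc.tendsto z).comp h2
    exact h3.congr fun m => hψS (f m) (h1 m)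
  -- ψ 1 = 0
  have hψ1 : ψ 1 = 0 := by
    have h := hψ 1 one_pos
    simpa using h
  -- ψ 0 = 0
  have hψ0 : ψ 0 = 0 := by
    have hc : Tendsto (fun m => (((p ^ m : ℕ)) : ℤ_[p])) atTop (nhds 0) := by
      apply tend_of_close
      intro m
      rw [zero_sub, norm_neg]
      push_cast
      rw [norm_p_pow_int]
    have h3 := tendS 0 (fun m => p ^ m) (fun m => Nat.one_le_iff_ne_zero.mpr (by positivity)) hc
    exact tendsto_nhds_unique h3 (S_pow_tendsto r)
  -- reflection
  have hrefl : ∀ z : ℤ_[p], ψ z = (-1 : ℚ_[p]) ^ r * ψ (1 - z) := by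
    intro z
    set f : ℕ → ℕ := fun m => if z.appr m = 0 then p ^ m else z.appr m with hf
    have hf1 : ∀ m, 1 ≤ f m := by
      intro m
      rw [hf]
      simp only
      split
      · exact Nat.one_le_iff_ne_zero.mpr (by positivity)
      · omega
    have hfle : ∀ m, f m ≤ p ^ m := by
      intro m
      rw [hf]
      simp only
      split
      · exact le_refl _
      · exact (PadicInt.appr_lt z m).le
    have hfc : ∀ m, ‖z - (f m : ℤ_[p])‖ ≤ ((p : ℝ)⁻¹) ^ m := by
      intro m
      rw [hf]
      simp only
      split
      · next h0 =>
        have : z - ((p ^ m : ℕ) : ℤ_[p]) = (z - (z.appr m : ℤ_[p])) - ((p ^ m : ℕ) : ℤ_[p]) := by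
          rw [h0]; push_cast; ring
        rw [this, sub_eq_add_neg]
        refine le_trans (IsUltrametricDist.norm_add_le_max _ _) (max_le (happr z m) ?_)
        rw [norm_neg]
        push_cast
        rw [norm_p_pow_int]
      · exact happr z m
    set g : ℕ → ℕ := fun m => p ^ m + 1 - f m with hg
    have hg1 : ∀ m, 1 ≤ g m := by
      intro m
      have := hfle m
      rw [hg]
      simp only
      omega
    have hgc : ∀ m, ‖(1 - z) - (g m : ℤ_[p])‖ ≤ ((p : ℝ)⁻¹) ^ m := by
      intro m
      have hcast : ((g m : ℕ) : ℤ_[p]) = ((p ^ m : ℕ) : ℤ_[p]) + 1 - (f m : ℤ_[p]) := by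
        rw [hg]
        simp only
        rw [Nat.cast_sub (by have := hfle m; omega)]
        push_cast
        ring
      rw [hcast]
      have heq : (1 - z) - (((p ^ m : ℕ) : ℤ_[p]) + 1 - (f m : ℤ_[p]))
          = ((f m : ℤ_[p]) - z) + (-((p ^ m : ℕ) : ℤ_[p])) := by ring
      rw [heq]
      refine le_trans (IsUltrametricDist.norm_add_le_max _ _) (max_le ?_ ?_)
      · rw [norm_sub_rev]; exact hfc m
      · rw [norm_neg]; push_cast; rw [norm_p_pow_int]
    have hx := tendS z f hf1 (tend_of_close z f hfc)
    have hy := tendS (1 - z) g hg1 (tend_of_close (1 - z) g hgc)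
    have hw : Tendsto (fun m => Sψ p r (p ^ m)) atTop (nhds 0) := S_pow_tendsto r
    have hcomb : Tendsto (fun m => Sψ p r (g m)
        - (-1 : ℚ_[p]) ^ (r + 1) * (Sψ p r (p ^ m) - Sψ p r (f m))) atTop (nhds 0) := by
      refine squeeze_zero_norm' ?_ hεt
      filter_upwards [eventually_ge_atTop 1] with m hm
      exact S_reflect r m (f m) hm (hf1 m) (hfle m)
    have hy' : Tendsto (fun m => Sψ p r (g m)) atTop
        (nhds ((-1 : ℚ_[p]) ^ (r + 1) * (0 - ψ z))) := by
      have h2 : Tendsto (fun m => (-1 : ℚ_[p]) ^ (r + 1) * (Sψ p r (p ^ m) - Sψ p r (f m)))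
          atTop (nhds ((-1 : ℚ_[p]) ^ (r + 1) * (0 - ψ z))) := (hw.sub hx).const_mul _
      have h3 := hcomb.add h2
      simpa using h3
    have hval : ψ (1 - z) = (-1 : ℚ_[p]) ^ (r + 1) * (0 - ψ z) := tendsto_nhds_unique hy hy'
    rw [hval, ← mul_assoc]
    have hm1 : (-1 : ℚ_[p]) ^ r * (-1 : ℚ_[p]) ^ (r + 1) = -1 := by
      rw [← zpow_add₀ (by norm_num : (-1 : ℚ_[p]) ≠ 0)]
      have h4 : r + (r + 1) = 2 * r + 1 := by ring
      rw [h4, zpow_add₀ (by norm_num : (-1 : ℚ_[p]) ≠ 0), zpow_mul]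
      norm_num
    rw [hm1]
    ring
  -- difference equation, unit case
  have hdiffu : ∀ z : ℤ_[p], IsUnit z → ψ (z + 1) - ψ z = ((z : ℚ_[p]) ^ (r + 1))⁻¹ := by
    intro z hz
    have hznorm : ‖z‖ = 1 := PadicInt.isUnit_iff.mp hz
    set f : ℕ → ℕ := fun m => z.appr (m + 1) with hf
    have hfc : ∀ m, ‖z - (f m : ℤ_[p])‖ ≤ ((p : ℝ)⁻¹) ^ m := by
      intro m
      refine le_trans (happr z (m + 1)) ?_
      exact pow_le_pow_of_le_one (by positivity) hlt.le (by omega)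
    have hfnd : ∀ m, ¬ p ∣ f m := by
      intro m hdvd
      have h1 : ‖(f m : ℤ_[p])‖ < 1 := by
        have : ((f m : ℤ) : ℤ_[p]) = ((f m : ℕ) : ℤ_[p]) := by push_cast; ring
        rw [← this, PadicInt.norm_int_lt_one_iff_dvd]
        exact_mod_cast hdvd
      have h2 : ‖z - (f m : ℤ_[p])‖ < 1 := by
        refine lt_of_le_of_lt (happr z (m + 1)) ?_
        calc ((p : ℝ)⁻¹) ^ (m + 1) ≤ ((p : ℝ)⁻¹) ^ 1 :=
              pow_le_pow_of_le_one (by positivity) hlt.le (by omega)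
          _ < 1 := by rwa [pow_one]
      have h3 : ‖z‖ < 1 := by
        have heq : z = (z - (f m : ℤ_[p])) + (f m : ℤ_[p]) := by ring
        rw [heq]
        exact lt_of_le_of_lt (IsUltrametricDist.norm_add_le_max _ _) (max_lt h2 h1)
      rw [hznorm] at h3
      exact absurd h3 (by norm_num)
    have hf1 : ∀ m, 1 ≤ f m := by
      intro m
      rcases Nat.eq_zero_or_pos (f m) with h | h
      · exact absurd (h ▸ dvd_zero p) (hfnd m)
      · exact h
    have hx := tendS z f hf1 (tend_of_close z f hfc)
    have hx1 : Tendsto (fun m => (((f m + 1 : ℕ)) : ℤ_[p])) atTop (nhds (z + 1)) := by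
      apply tend_of_close
      intro m
      have : (z + 1) - ((f m + 1 : ℕ) : ℤ_[p]) = z - (f m : ℤ_[p]) := by push_cast; ring
      rw [this]
      exact hfc m
    have hS1 := tendS (z + 1) (fun m => f m + 1) (fun m => Nat.le_add_left 1 (f m)) hx1
    have hstep : ∀ m, Sψ p r (f m + 1) - Sψ p r (f m)
        = (((f m : ℕ) : ℚ_[p]) ^ (r + 1))⁻¹ := by
      intro m
      unfold Sψ
      rw [Finset.sum_Ico_succ_top (hf1 m), if_neg (hfnd m)]
      ring
    have hznq : ‖(z : ℚ_[p])‖ = 1 := by rw [PadicInt.padic_norm_e_of_padicInt]; exact hznorm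
    have hterm : Tendsto (fun m => (((f m : ℕ) : ℚ_[p]) ^ (r + 1))⁻¹) atTop
        (nhds (((z : ℚ_[p]) ^ (r + 1))⁻¹)) := by
      have hd : ∀ m, ‖(((f m : ℕ) : ℚ_[p]) ^ (r + 1))⁻¹ - ((z : ℚ_[p]) ^ (r + 1))⁻¹‖
          ≤ ((p : ℝ)⁻¹) ^ m := by
        intro m
        have hcl : ‖((f m : ℕ) : ℚ_[p]) - (z : ℚ_[p])‖ ≤ ((p : ℝ)⁻¹) ^ m := by
          have hcast : ((f m : ℕ) : ℚ_[p]) - (z : ℚ_[p]) = (((f m : ℤ_[p]) - z : ℤ_[p]) : ℚ_[p]) := by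
            push_cast
            ring
          rw [hcast, PadicInt.padic_norm_e_of_padicInt, norm_sub_rev]
          exact hfc m
        have hzz := zpow_close (norm_natCast_eq_one (hfnd m)) hznq hcl (-(r + 1))
        rwa [zpow_neg, zpow_neg] at hzz
      have h0 : Tendsto (fun m => (((f m : ℕ) : ℚ_[p]) ^ (r + 1))⁻¹
          - ((z : ℚ_[p]) ^ (r + 1))⁻¹) atTop (nhds 0) := squeeze_zero_norm hd hεt
      have h1 := h0.add (tendsto_const_nhds (x := ((z : ℚ_[p]) ^ (r + 1))⁻¹)
        (f := (atTop : Filter ℕ)))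
      simpa using h1
    have hfin := hS1.sub hx
    have hfin' : Tendsto (fun m => (((f m : ℕ) : ℚ_[p]) ^ (r + 1))⁻¹) atTop
        (nhds (ψ (z + 1) - ψ z)) := hfin.congr fun m => hstep m
    exact tendsto_nhds_unique hfin' hterm
  -- difference equation, divisible case
  have hdiffp : ∀ z : ℤ_[p], (p : ℤ_[p]) ∣ z → ψ (z + 1) - ψ z = 0 := by
    intro z hz
    have hznorm : ‖z‖ ≤ (p : ℝ)⁻¹ := by
      rcases hz with ⟨t, rfl⟩
      rw [norm_mul, PadicInt.norm_p]
      calc (p : ℝ)⁻¹ * ‖t‖ ≤ (p : ℝ)⁻¹ * 1 :=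
            mul_le_mul_of_nonneg_left (PadicInt.norm_le_one t) (by positivity)
        _ = (p : ℝ)⁻¹ := mul_one _
    set f : ℕ → ℕ := fun m => if z.appr (m + 1) = 0 then p ^ (m + 1) else z.appr (m + 1) with hf
    have hfc : ∀ m, ‖z - (f m : ℤ_[p])‖ ≤ ((p : ℝ)⁻¹) ^ m := by
      intro m
      have hgen : ‖z - (f m : ℤ_[p])‖ ≤ ((p : ℝ)⁻¹) ^ (m + 1) := by
        rw [hf]
        simp only
        split
        · next h0 =>
          have heq : z - ((p ^ (m + 1) : ℕ) : ℤ_[p])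
              = (z - (z.appr (m + 1) : ℤ_[p])) - ((p ^ (m + 1) : ℕ) : ℤ_[p]) := by
            rw [h0]; push_cast; ring
          rw [heq, sub_eq_add_neg]
          refine le_trans (IsUltrametricDist.norm_add_le_max _ _)
            (max_le (happr z (m + 1)) ?_)
          rw [norm_neg]
          push_cast
          rw [norm_p_pow_int]
        · exact happr z (m + 1)
      refine le_trans hgen ?_
      exact pow_le_pow_of_le_one (by positivity) hlt.le (by omega)
    have hfd : ∀ m, p ∣ f m := by
      intro m
      rw [hf]
      simp only
      split
      · exact dvd_pow_self p (by omega)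
      · next h0 =>
        have h1 : ‖(z.appr (m + 1) : ℤ_[p])‖ < 1 := by
          have heq : (z.appr (m + 1) : ℤ_[p]) = ((z.appr (m + 1) : ℤ_[p]) - z) + z := by ring
          rw [heq]
          refine lt_of_le_of_lt (IsUltrametricDist.norm_add_le_max _ _) (max_lt ?_ ?_)
          · rw [norm_sub_rev]
            refine lt_of_le_of_lt (happr z (m + 1)) ?_
            calc ((p : ℝ)⁻¹) ^ (m + 1) ≤ ((p : ℝ)⁻¹) ^ 1 :=
                  pow_le_pow_of_le_one (by positivity) hlt.le (by omega)
              _ < 1 := by rwa [pow_one]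
          · exact lt_of_le_of_lt hznorm hlt
        have h2 : ((z.appr (m + 1) : ℤ) : ℤ_[p]) = ((z.appr (m + 1) : ℕ) : ℤ_[p]) := by
          push_cast; ring
        rw [← h2, PadicInt.norm_int_lt_one_iff_dvd] at h1
        exact_mod_cast h1
    have hf1 : ∀ m, 1 ≤ f m := by
      intro m
      rw [hf]
      simp only
      split
      · exact Nat.one_le_iff_ne_zero.mpr (by positivity)
      · omega
    have hx := tendS z f hf1 (tend_of_close z f hfc)
    have hx1 : Tendsto (fun m => (((f m + 1 : ℕ)) : ℤ_[p])) atTop (nhds (z + 1)) := by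
      apply tend_of_close
      intro m
      have heq : (z + 1) - ((f m + 1 : ℕ) : ℤ_[p]) = z - (f m : ℤ_[p]) := by push_cast; ring
      rw [heq]
      exact hfc m
    have hS1 := tendS (z + 1) (fun m => f m + 1) (fun m => Nat.le_add_left 1 (f m)) hx1
    have hstep : ∀ m, Sψ p r (f m + 1) - Sψ p r (f m) = 0 := by
      intro m
      unfold Sψ
      rw [Finset.sum_Ico_succ_top (hf1 m), if_pos (hfd m)]
      ring
    have hfin := hS1.sub hx
    have hfin' : Tendsto (fun _ : ℕ => (0 : ℚ_[p])) atTop (nhds (ψ (z + 1) - ψ z)) :=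
      hfin.congr fun m => hstep m
    exact tendsto_nhds_unique hfin' tendsto_const_nhds
  exact ⟨hψ0, hψ1, hrefl, hdiffu, hdiffp⟩
end

section
/- Let p be a prime and b, x ∈ ℤ_(p) with 0 < b < 1 and 0 < x < 1, and set μ := p(1 − b^{(1)}) − (1 − b), an integer with 0 ≤ μ ≤ p−1. Define B := (p·x^{(1)} − p·b^{(1)})_+ if x − b ∉ pℤ_p, and B := 1 if x − b ∈ pℤ_p. Then Γ_p(x − b + 1 + μ) / (x − b + 1)_μ = (−1)^μ · Γ_p(x − b + 1) / B, where (x − b + 1)_μ ≠ 0 since x − b + 1 > 0. -/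
open Finset

noncomputable section

/-- `α'` is the Dwork prime `α^{(1)}` of `α`: `α' = (α + T)/p` where `0 ≤ T < p`
and `α + T ≡ 0 (mod p)` (i.e. `(α + T)/p` has p-adic norm at most `1`). -/
def IsDworkPrime (p : ℕ) [Fact p.Prime] (α α' : ℚ) : Prop :=
  ∃ T : ℕ, T < p ∧ ‖(((α + T) / p : ℚ) : ℚ_[p])‖ ≤ 1 ∧ α' = (α + T) / p

/-- `(t)₊ = t` if `t > 0` and `1` otherwise. -/
def rplus (x : ℚ) : ℚ := if 0 < x then x else 1

/-- The Pochhammer symbol `(x)_m = x(x+1)⋯(x+m-1)`. -/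
def pochQ (x : ℚ) (m : ℕ) : ℚ := ∏ i ∈ range m, (x + i)

section Helpers
open Filter

lemma gamma_step (p : ℕ) [Fact p.Prime] (Γ : ℚ_[p] → ℚ_[p])
    (hΓ : ∀ m : ℕ, 0 < m →
      Γ (m : ℚ_[p]) = (-1 : ℚ_[p]) ^ m * ∏ k ∈ Finset.Ico 1 m, if p ∣ k then 1 else (k : ℚ_[p]))
    (m : ℕ) (hm : 0 < m) :
    Γ ((m : ℚ_[p]) + 1) = -(if p ∣ m then 1 else (m : ℚ_[p])) * Γ m := by
  have h1 := hΓ m hm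
  have h2 := hΓ (m + 1) (Nat.succ_pos m)
  rw [Finset.prod_Ico_succ_top hm, pow_succ] at h2
  push_cast at h2
  rw [h2, h1]; ring

lemma gamma_feq (p : ℕ) [Fact p.Prime] (Γ : ℚ_[p] → ℚ_[p])
    (hΓc : ContinuousOn Γ {x : ℚ_[p] | ‖x‖ ≤ 1})
    (hΓ : ∀ m : ℕ, 0 < m →
      Γ (m : ℚ_[p]) = (-1 : ℚ_[p]) ^ m * ∏ k ∈ Finset.Ico 1 m, if p ∣ k then 1 else (k : ℚ_[p]))
    (z : ℚ_[p]) (hz : ‖z‖ ≤ 1) :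
    Γ (z + 1) = -(if ‖z‖ ≤ (p : ℝ)⁻¹ then 1 else z) * Γ z := by
  have hp1 : (1 : ℝ) < p := by exact_mod_cast (Fact.out : p.Prime).one_lt
  have hpinv1 : (p : ℝ)⁻¹ < 1 := by
    rw [inv_lt_one_iff₀]; right; exact hp1
  have hpinv0 : (0:ℝ) ≤ (p : ℝ)⁻¹ := by positivity
  set w : ℤ_[p] := ⟨z, hz⟩ with hw
  set m : ℕ → ℕ := fun n => w.appr (n + 1) + p ^ (n + 1) with hm
  have hmpos : ∀ n, 0 < m n := fun n =>
    Nat.lt_of_lt_of_le (pow_pos (Fact.out : p.Prime).pos (n+1)) (Nat.le_add_left _ _)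
  -- approximation
  have happrox : ∀ n, ‖z - (m n : ℚ_[p])‖ ≤ ((p : ℝ)⁻¹) ^ (n + 1) := by
    intro n
    have h := PadicInt.appr_spec (n + 1) w
    rw [Ideal.mem_span_singleton] at h
    obtain ⟨c, hc⟩ := h
    have key : w - (m n : ℤ_[p]) = (p : ℤ_[p]) ^ (n+1) * (c - 1) := by
      have : ((m n : ℕ) : ℤ_[p]) = (w.appr (n+1) : ℤ_[p]) + (p : ℤ_[p]) ^ (n+1) := by
        push_cast [hm]; ring
      rw [this, sub_add_eq_sub_sub, hc]; ring
    have hnorm : ‖w - (m n : ℤ_[p])‖ ≤ ((p : ℝ)⁻¹) ^ (n + 1) := by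
      rw [key]
      calc ‖(p : ℤ_[p]) ^ (n+1) * (c - 1)‖ ≤ ‖(p : ℤ_[p]) ^ (n+1)‖ * ‖c - 1‖ := norm_mul_le _ _
        _ ≤ ‖(p : ℤ_[p]) ^ (n+1)‖ * 1 :=
            mul_le_mul_of_nonneg_left (PadicInt.norm_le_one _) (norm_nonneg _)
        _ = ((p:ℝ)⁻¹) ^ (n+1) := by
            rw [mul_one, PadicInt.norm_p_pow]
            rw [zpow_neg, inv_pow]
            norm_cast
    rw [PadicInt.norm_def, PadicInt.coe_sub, PadicInt.coe_natCast] at hnorm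
    exact hnorm
  have htend : Tendsto (fun n => ((m n : ℕ) : ℚ_[p])) atTop (nhds z) := by
    rw [← tendsto_sub_nhds_zero_iff]
    apply squeeze_zero_norm (a := fun n => ((p:ℝ)⁻¹) ^ (n+1))
    · intro n; rw [← norm_neg]; simpa using happrox n
    · exact (tendsto_pow_atTop_nhds_zero_of_lt_one hpinv0 hpinv1).comp (tendsto_add_atTop_nat 1)
  have hmem : ∀ n, ((m n : ℕ) : ℚ_[p]) ∈ {x : ℚ_[p] | ‖x‖ ≤ 1} := by
    intro n
    simpa using Padic.norm_int_le_one (p := p) (m n : ℤ)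
  -- divisibility dichotomy
  have hdvd : ∀ n, (p ∣ m n ↔ ‖z‖ ≤ (p : ℝ)⁻¹) := by
    intro n
    have hzmn : ‖z - (m n : ℚ_[p])‖ < 1 :=
      lt_of_le_of_lt (happrox n) (pow_lt_one₀ hpinv0 hpinv1 (Nat.succ_ne_zero n))
    constructor
    · intro hd
      have h1 : ‖((m n : ℤ) : ℚ_[p])‖ ≤ (p:ℝ)⁻¹ := by
        have := (Padic.norm_intCast_lt_one_iff (k := (m n : ℤ))).2 (by exact_mod_cast hd)
        have h2 := Padic.norm_le_pow_iff_norm_lt_pow_add_one ((m n : ℤ) : ℚ_[p]) (-1)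
        rw [show (-1 + 1 : ℤ) = 0 by ring] at h2
        simpa [zpow_neg_one] using h2.2 (by simpa using this)
      have : ‖z‖ = ‖(z - (m n : ℚ_[p])) + (m n : ℚ_[p])‖ := by ring_nf
      rw [this]
      refine le_trans (Padic.nonarchimedean _ _) (max_le ?_ (by exact_mod_cast h1))
      · exact le_trans (happrox n) (by
          calc ((p:ℝ)⁻¹)^(n+1) = (p:ℝ)⁻¹ * ((p:ℝ)⁻¹)^n := by ring
            _ ≤ (p:ℝ)⁻¹ * 1 := by
                exact mul_le_mul_of_nonneg_left (pow_le_one₀ hpinv0 hpinv1.le) hpinv0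
            _ = (p:ℝ)⁻¹ := mul_one _)
    · intro hzn
      by_contra hd
      have h1 : ‖((m n : ℤ) : ℚ_[p])‖ = 1 := by
        refine le_antisymm (Padic.norm_int_le_one _) (not_lt.1 fun h => hd ?_)
        exact_mod_cast (Padic.norm_intCast_lt_one_iff (k := (m n : ℤ))).1 h
      have h2 : ‖(m n : ℚ_[p])‖ = 1 := by exact_mod_cast h1
      have : ‖(m n : ℚ_[p])‖ ≤ max ‖(m n : ℚ_[p]) - z‖ ‖z‖ := by
        calc ‖(m n : ℚ_[p])‖ = ‖((m n : ℚ_[p]) - z) + z‖ := by ring_nf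
          _ ≤ _ := Padic.nonarchimedean _ _
      rw [h2] at this
      rcases max_le_iff.1 (le_refl (max ‖(m n : ℚ_[p]) - z‖ ‖z‖)) with ⟨-, -⟩
      have hmax : max ‖(m n : ℚ_[p]) - z‖ ‖z‖ < 1 := by
        apply max_lt
        · rw [← norm_neg]; simpa using hzmn
        · exact lt_of_le_of_lt hzn hpinv1
      linarith [lt_of_le_of_lt this hmax]
  -- limits
  have hz1 : ‖z + 1‖ ≤ 1 := le_trans (Padic.nonarchimedean _ _) (by simp [hz])
  have hA : Tendsto (fun n => Γ (((m n : ℕ) : ℚ_[p]) + 1)) atTop (nhds (Γ (z + 1))) := by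
    have hc : Tendsto (fun n => ((m n : ℕ) : ℚ_[p]) + 1) atTop (nhds (z + 1)) :=
      htend.add tendsto_const_nhds
    refine ((hΓc (z+1) hz1).tendsto).comp
      (tendsto_nhdsWithin_of_tendsto_nhds_of_eventually_within _ hc (Eventually.of_forall ?_))
    intro n
    have : ((m n : ℕ) : ℚ_[p]) + 1 = ((m n + 1 : ℕ) : ℚ_[p]) := by push_cast; ring
    rw [this]
    simpa using Padic.norm_int_le_one (p := p) (m n + 1 : ℤ)
  have hB : Tendsto (fun n => Γ ((m n : ℕ) : ℚ_[p])) atTop (nhds (Γ z)) :=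
    ((hΓc z hz).tendsto).comp
      (tendsto_nhdsWithin_of_tendsto_nhds_of_eventually_within _ htend
        (Eventually.of_forall hmem))
  have heq : ∀ n, Γ (((m n : ℕ) : ℚ_[p]) + 1)
      = -(if ‖z‖ ≤ (p:ℝ)⁻¹ then 1 else ((m n : ℕ) : ℚ_[p])) * Γ ((m n : ℕ) : ℚ_[p]) := by
    intro n
    rw [gamma_step p Γ hΓ (m n) (hmpos n)]
    congr 2
    by_cases hc : ‖z‖ ≤ (p:ℝ)⁻¹
    · rw [if_pos hc, if_pos ((hdvd n).2 hc)]
    · rw [if_neg hc, if_neg (fun hd => hc ((hdvd n).1 hd))]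
  have hC : Tendsto (fun n => -(if ‖z‖ ≤ (p:ℝ)⁻¹ then 1 else ((m n : ℕ) : ℚ_[p])) *
      Γ ((m n : ℕ) : ℚ_[p])) atTop (nhds (-(if ‖z‖ ≤ (p:ℝ)⁻¹ then 1 else z) * Γ z)) := by
    refine Tendsto.mul (Tendsto.neg ?_) hB
    by_cases hc : ‖z‖ ≤ (p:ℝ)⁻¹
    · simp only [if_pos hc]; exact tendsto_const_nhds
    · simp only [if_neg hc]; exact htend
  exact tendsto_nhds_unique (by simpa only [heq] using hA) hC

lemma gamma_iter (p : ℕ) [Fact p.Prime] (Γ : ℚ_[p] → ℚ_[p])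
    (hΓc : ContinuousOn Γ {x : ℚ_[p] | ‖x‖ ≤ 1})
    (hΓ : ∀ m : ℕ, 0 < m →
      Γ (m : ℚ_[p]) = (-1 : ℚ_[p]) ^ m * ∏ k ∈ Finset.Ico 1 m, if p ∣ k then 1 else (k : ℚ_[p]))
    (z : ℚ_[p]) (hz : ‖z‖ ≤ 1) (μ : ℕ) :
    Γ (z + μ) = (-1 : ℚ_[p]) ^ μ *
      (∏ j ∈ range μ, (if ‖z + j‖ ≤ (p : ℝ)⁻¹ then 1 else z + j)) * Γ z := by
  induction μ with
  | zero => simp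
  | succ n ih =>
    have hzn : ‖z + n‖ ≤ 1 := by
      refine le_trans (Padic.nonarchimedean _ _) (max_le hz ?_)
      simpa using Padic.norm_int_le_one (p := p) (n : ℤ)
    have h1 : z + ((n + 1 : ℕ) : ℚ_[p]) = (z + n) + 1 := by push_cast; ring
    rw [h1, gamma_feq p Γ hΓc hΓ (z + n) hzn, ih, prod_range_succ, pow_succ]
    ring

end Helpers

/-- **Lemma:** with `μ = p(1-b^{(1)}) - (1-b)` and
`B = (p x^{(1)} - p b^{(1)})₊` if `x - b ∉ pℤ_p`, `B = 1` if `x - b ∈ pℤ_p`, one has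
`Γ_p(x-b+1+μ)/(x-b+1)_μ = (-1)^μ Γ_p(x-b+1)/B`, and `(x-b+1)_μ ≠ 0`. -/
theorem stmt_7 (p : ℕ) [Fact p.Prime]
    (Γ : ℚ_[p] → ℚ_[p]) (hΓc : ContinuousOn Γ {x : ℚ_[p] | ‖x‖ ≤ 1})
    (hΓu : ∀ x : ℚ_[p], ‖x‖ ≤ 1 → ‖Γ x‖ = 1)
    (hΓ : ∀ m : ℕ, 0 < m →
      Γ (m : ℚ_[p]) = (-1 : ℚ_[p]) ^ m * ∏ k ∈ Finset.Ico 1 m, if p ∣ k then 1 else (k : ℚ_[p]))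
    (b x : ℚ) (hbZ : ‖(b : ℚ_[p])‖ ≤ 1) (hxZ : ‖(x : ℚ_[p])‖ ≤ 1)
    (hb0 : 0 < b) (hb1 : b < 1) (hx0 : 0 < x) (hx1 : x < 1)
    (b1 x1 : ℚ) (hb' : IsDworkPrime p b b1) (hx' : IsDworkPrime p x x1)
    (μ : ℕ) (hμ : (μ : ℚ) = p * (1 - b1) - (1 - b)) :
    pochQ (x - b + 1) μ ≠ 0 ∧
      Γ ((x - b + 1 + μ : ℚ) : ℚ_[p]) / ((pochQ (x - b + 1) μ : ℚ) : ℚ_[p]) =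
        (-1 : ℚ_[p]) ^ μ * Γ ((x - b + 1 : ℚ) : ℚ_[p]) /
          (((if ‖((x - b : ℚ) : ℚ_[p])‖ ≤ (p : ℝ)⁻¹ then 1
              else rplus (p * x1 - p * b1)) : ℚ) : ℚ_[p]) := by
  obtain ⟨Tb, hTbp, hTbn, hb1eq⟩ := hb'
  obtain ⟨Tx, hTxp, hTxn, hx1eq⟩ := hx'
  have hpP : p.Prime := Fact.out
  have hpQ : (p : ℚ) ≠ 0 := Nat.cast_ne_zero.2 hpP.pos.ne'
  have hp1R : (1 : ℝ) < p := by exact_mod_cast hpP.one_lt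
  have hpinv1 : (p : ℝ)⁻¹ < 1 := by rw [inv_lt_one_iff₀]; right; exact hp1R
  have hpinv0 : (0:ℝ) < (p : ℝ)⁻¹ := by positivity
  -- μ + Tb + 1 = p
  have hμT : ((μ + Tb + 1 : ℕ) : ℚ) = p := by
    push_cast
    rw [hμ, hb1eq]; field_simp; ring
  have hμTn : μ + Tb + 1 = p := by exact_mod_cast hμT
  -- norm facts
  have key : ∀ (a : ℚ) (T : ℕ), ‖(((a + T) / p : ℚ) : ℚ_[p])‖ ≤ 1 →
      ‖(a : ℚ_[p]) + T‖ ≤ (p : ℝ)⁻¹ := by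
    intro a T h
    have h2 : (((a + T) / p : ℚ) : ℚ_[p]) = ((a:ℚ_[p]) + T) / p := by push_cast; ring
    rw [h2, norm_div, Padic.norm_p] at h
    exact (div_le_one hpinv0).1 h
  have hbn : ‖(b : ℚ_[p]) + Tb‖ ≤ (p : ℝ)⁻¹ := key b Tb hTbn
  have hxn : ‖(x : ℚ_[p]) + Tx‖ ≤ (p : ℝ)⁻¹ := key x Tx hTxn
  set u : ℚ_[p] := ((x : ℚ_[p]) + Tx) - ((b : ℚ_[p]) + Tb) with hu_def
  have hun : ‖u‖ ≤ (p : ℝ)⁻¹ := by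
    rw [hu_def, sub_eq_add_neg]
    exact le_trans (Padic.nonarchimedean _ _) (max_le hxn (by rwa [norm_neg]))
  set z : ℚ_[p] := ((x - b + 1 : ℚ) : ℚ_[p]) with hz_def
  have hz : ‖z‖ ≤ 1 := by
    rw [hz_def]
    push_cast
    refine le_trans (Padic.nonarchimedean _ _) (max_le ?_ (by simp))
    rw [sub_eq_add_neg]
    exact le_trans (Padic.nonarchimedean _ _) (max_le hxZ (by rwa [norm_neg]))
  -- pochhammer nonzero
  have hpoch_pos : 0 < pochQ (x - b + 1) μ := by
    refine Finset.prod_pos fun i _ => ?_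
    have : (0:ℚ) ≤ i := Nat.cast_nonneg i
    linarith
  have hpoch_ne : pochQ (x - b + 1) μ ≠ 0 := ne_of_gt hpoch_pos
  refine ⟨hpoch_ne, ?_⟩
  have hPne : ((pochQ (x - b + 1) μ : ℚ) : ℚ_[p]) ≠ 0 := by exact_mod_cast hpoch_ne
  have hcast1 : ((x - b + 1 + μ : ℚ) : ℚ_[p]) = z + μ := by rw [hz_def]; push_cast; ring
  have hpochcast : ((pochQ (x - b + 1) μ : ℚ) : ℚ_[p]) = ∏ j ∈ range μ, (z + j) := by
    rw [pochQ, Rat.cast_prod]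
    exact Finset.prod_congr rfl fun j _ => by rw [hz_def]; push_cast; ring
  rw [hcast1, gamma_iter p Γ hΓc hΓ z hz μ]
  -- norm of z + j via integer k
  have hnorm_zj : ∀ j : ℕ, j < μ → (1 + (j:ℤ) + Tb ≠ Tx) → ¬ ‖z + j‖ ≤ (p:ℝ)⁻¹ := by
    intro j hj hk
    set k : ℤ := 1 + (j:ℤ) + Tb - Tx with hk_def
    have hzj : z + j = (k : ℚ_[p]) + u := by
      rw [hz_def, hu_def, hk_def]; push_cast; ring
    have hkne : k ≠ 0 := fun h => hk (by omega)
    have hkabs : |k| < p := by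
      rw [abs_lt]
      constructor <;> [skip; skip] <;> omega
    have hknd : ¬ (p:ℤ) ∣ k := by
      intro hd
      exact hkne (Int.eq_zero_of_abs_lt_dvd hd hkabs)
    have hkn1 : ‖(k : ℚ_[p])‖ = 1 :=
      le_antisymm (Padic.norm_int_le_one k)
        (not_lt.1 fun h => hknd ((Padic.norm_intCast_lt_one_iff (k := k)).1 h))
    have hne2 : ‖(k : ℚ_[p])‖ ≠ ‖u‖ := by
      rw [hkn1]; exact ne_of_gt (lt_of_le_of_lt hun hpinv1)
    have : ‖z + j‖ = 1 := by
      rw [hzj, Padic.add_eq_max_of_ne hne2, hkn1]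
      exact max_eq_left (le_trans hun hpinv1.le)
    rw [this]; exact fun h => absurd (lt_of_le_of_lt h hpinv1) (lt_irrefl 1)
  by_cases hc : ‖((x - b : ℚ) : ℚ_[p])‖ ≤ (p : ℝ)⁻¹
  · -- x - b ∈ pℤ_p : B = 1, all factors units
    rw [if_pos hc]
    have hTeq : (Tx : ℤ) = Tb := by
      by_contra hne
      have hd : ((x - b : ℚ) : ℚ_[p]) = ((Tb : ℤ) - Tx : ℤ) + u := by
        rw [hu_def]; push_cast; ring
      have hkne : ((Tb:ℤ) - Tx) ≠ 0 := fun h => hne (by omega)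
      have hknd : ¬ (p:ℤ) ∣ ((Tb:ℤ) - Tx) := by
        intro hdd
        refine hkne (Int.eq_zero_of_abs_lt_dvd hdd ?_)
        rw [abs_lt]; omega
      have hkn1 : ‖(((Tb:ℤ) - Tx : ℤ) : ℚ_[p])‖ = 1 :=
        le_antisymm (Padic.norm_int_le_one _)
          (not_lt.1 fun h => hknd ((Padic.norm_intCast_lt_one_iff).1 h))
      have hne2 : ‖(((Tb:ℤ) - Tx : ℤ) : ℚ_[p])‖ ≠ ‖u‖ := by
        rw [hkn1]; exact ne_of_gt (lt_of_le_of_lt hun hpinv1)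
      have : ‖((x - b : ℚ) : ℚ_[p])‖ = 1 := by
        rw [hd, Padic.add_eq_max_of_ne hne2, hkn1]
        exact max_eq_left (le_trans hun hpinv1.le)
      rw [this] at hc; linarith
    have hprod : (∏ j ∈ range μ, (if ‖z + j‖ ≤ (p:ℝ)⁻¹ then 1 else z + j))
        = ∏ j ∈ range μ, (z + j) := by
      refine Finset.prod_congr rfl fun j hj => ?_
      rw [mem_range] at hj
      exact if_neg (hnorm_zj j hj (by omega))
    rw [hprod, ← hpochcast]
    push_cast
    field_simp
  · -- x - b unit
    rw [if_neg hc]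
    have hTne : (Tx : ℤ) ≠ Tb := by
      intro heq
      apply hc
      have : ((x - b : ℚ) : ℚ_[p]) = u := by rw [hu_def]; push_cast; rw [show ((Tx:ℚ_[p])) = ((Tb:ℕ):ℚ_[p]) by exact_mod_cast congrArg (fun t : ℤ => ((t:ℚ_[p]))) heq]; ring
      rw [this]; exact hun
    have hBval : (p * x1 - p * b1 : ℚ) = (x - b) + ((Tx:ℚ) - Tb) := by
      rw [hx1eq, hb1eq]; field_simp; ring
    by_cases hlt : Tx < Tb
    · -- B = 1, all factors units
      have hB1 : rplus (p * x1 - p * b1) = 1 := by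
        rw [rplus, if_neg]
        rw [hBval]
        have : (Tx:ℚ) - Tb ≤ -1 := by
          have : (Tx:ℚ) + 1 ≤ Tb := by exact_mod_cast Nat.succ_le_of_lt hlt
          linarith
        push_neg; linarith
      rw [hB1]
      have hprod : (∏ j ∈ range μ, (if ‖z + j‖ ≤ (p:ℝ)⁻¹ then 1 else z + j))
          = ∏ j ∈ range μ, (z + j) := by
        refine Finset.prod_congr rfl fun j hj => ?_
        rw [mem_range] at hj
        exact if_neg (hnorm_zj j hj (by omega))
      rw [hprod, ← hpochcast]
      push_cast
      field_simp
    · -- Tb < Tx : one factor absorbed into B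
      have hgt : Tb < Tx := by omega
      set j0 : ℕ := Tx - Tb - 1 with hj0_def
      have hj0T : j0 + Tb + 1 = Tx := by omega
      have hj0μ : j0 < μ := by omega
      have hzj0 : z + j0 = u := by
        have h1 : ((j0:ℚ_[p])) + Tb + 1 = Tx := by exact_mod_cast hj0T
        rw [hz_def, hu_def]; push_cast; linear_combination h1
      have hBpos : (0:ℚ) < p * x1 - p * b1 := by
        rw [hBval]
        have : (1:ℚ) ≤ (Tx:ℚ) - Tb := by
          have : (Tb:ℚ) + 1 ≤ Tx := by exact_mod_cast Nat.succ_le_of_lt hgt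
          linarith
        linarith
      have hBv2 : rplus (p * x1 - p * b1) = (x - b) + ((Tx:ℚ) - Tb) := by
        rw [rplus, if_pos hBpos, hBval]
      have hBcast : ((rplus (p * x1 - p * b1) : ℚ) : ℚ_[p]) = z + j0 := by
        rw [hBv2, hzj0, hu_def]; push_cast; ring
      -- the product
      have hj0mem : j0 ∈ range μ := mem_range.2 hj0μ
      have hfj0 : (if ‖z + j0‖ ≤ (p:ℝ)⁻¹ then (1:ℚ_[p]) else z + j0) = 1 := by
        rw [if_pos (by rw [hzj0]; exact hun)]
      have hprod : (∏ j ∈ range μ, (if ‖z + j‖ ≤ (p:ℝ)⁻¹ then 1 else z + j))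
          = ∏ j ∈ (range μ).erase j0, (z + j) := by
        rw [← Finset.mul_prod_erase _ _ hj0mem, hfj0, one_mul]
        refine Finset.prod_congr rfl fun j hj => ?_
        rw [Finset.mem_erase, mem_range] at hj
        exact if_neg (hnorm_zj j hj.2 (by omega))
      have hpoch2 : ((pochQ (x - b + 1) μ : ℚ) : ℚ_[p])
          = (z + j0) * ∏ j ∈ (range μ).erase j0, (z + j) := by
        rw [hpochcast, ← Finset.mul_prod_erase _ _ hj0mem]
      have hzj0ne : z + (j0:ℚ_[p]) ≠ 0 := by
        rw [← hBcast]
        exact_mod_cast ne_of_gt (by rw [hBv2]; rw [hBval] at hBpos; exact hBpos)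
      have hQne : (∏ j ∈ (range μ).erase j0, (z + j)) ≠ 0 := by
        intro h
        rw [hpoch2, h, mul_zero] at hPne
        exact hPne rfl
      rw [hprod, hpoch2, hBcast]
      field_simp
end
end

section
/- Let K be a field of characteristic zero, let n ≥ s ≥ 1 be integers, and let ε_1,…,ε_n ∈ K with ε_1,…,ε_s pairwise distinct. Set F(z) := ∏_{i=1}^n (z − ε_i) and Δ(z) := ∏_{i=1}^s (z − ε_i). Then the following identity of polynomials in the variable x over K holds: ∑_{k=1}^s Δ'(ε_k)^{−1} · ∑_{i=0}^{n−1} ((−1)^{i+1+n}/(i+1)!) · (x + ε_k)^i · F^{(i+1)}(ε_k) = (−1)^{s+1} · ∏_{i=s+1}^n (x + ε_i), where F^{(j)} denotes the j-th derivative of F and Δ' the derivative of Δ (note Δ'(ε_k) ≠ 0 since ε_1,…,ε_s are pairwise distinct). -/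
/-- Polynomial derivative as a plain function (for iteration). -/
noncomputable def pder {K : Type*} [CommRing K] (f : Polynomial K) : Polynomial K :=
  Polynomial.derivative f

open Polynomial Finset

lemma pder_iter {K : Type*} [CommRing K] (m : ℕ) (f : Polynomial K) :
    pder^[m] f = (⇑Polynomial.derivative)^[m] f := rfl

lemma my_inner_sum {K : Type*} [Field K] [CharZero K] {n : ℕ} (ε : Fin n → K) (k : Fin n) :
    ∑ i ∈ Finset.range n,
      C ((-1 : K) ^ (i + 1 + n) / (Nat.factorial (i + 1) : K)) * (X + C (ε k)) ^ i *
        C ((pder^[i + 1] (∏ j : Fin n, (X - C (ε j)))).eval (ε k)) =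
      ∏ j ∈ univ.erase k, (X + C (ε j)) := by
  set F : K[X] := ∏ j : Fin n, (X - C (ε j)) with hF
  set r := ε k with hr
  set h : ℕ → K := fun i => (hasseDeriv i F).eval r with hh
  have hFr : F.eval r = 0 := by
    rw [hF, eval_prod]
    exact Finset.prod_eq_zero (mem_univ k) (by simp [hr])
  have hdeg : F.natDegree = n := by
    rw [hF, natDegree_prod_of_monic _ _ (fun j _ => monic_X_sub_C (ε j))]
    simp
  have hiter : ∀ i : ℕ, (pder^[i] F).eval r = (i.factorial : K) * h i := by
    intro i
    rw [pder_iter, ← factorial_smul_hasseDeriv]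
    simp [hh, nsmul_eq_mul]
  have key : ∀ i : ℕ, C ((-1 : K) ^ (i + 1 + n) / (Nat.factorial (i + 1) : K)) *
      C ((pder^[i+1] F).eval r) = C ((-1:K)^(i+1+n) * h (i+1)) := by
    intro i
    have hfac : ((i+1).factorial : K) ≠ 0 := Nat.cast_ne_zero.mpr (Nat.factorial_ne_zero _)
    rw [hiter, ← C_mul]
    congr 1
    field_simp
  -- Taylor expansion of F at r
  have taylor_eq : F = ∑ i ∈ Finset.range (n+1), C (h i) * (X - C r) ^ i := by
    conv_lhs => rw [← sum_taylor_eq F r]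
    rw [Polynomial.sum_over_range' (n := n+1)]
    · exact Finset.sum_congr rfl fun i _ => by rw [taylor_coeff]
    · intro i; simp
    · rw [natDegree_taylor, hdeg]; omega
  -- substitute -X
  have subst : ((-1 : K[X])^n) * ∏ j : Fin n, (X + C (ε j)) =
      ∑ i ∈ Finset.range (n+1), C (h i) * ((-1:K[X]))^i * (X + C r) ^ i := by
    have := congrArg (Polynomial.aeval (-X : K[X])) taylor_eq
    rw [hF] at this
    simp only [map_prod, map_sum, map_mul, map_pow, map_sub, map_add, aeval_X, aeval_C,
      algebraMap_eq] at this
    calc ((-1 : K[X])^n) * ∏ j : Fin n, (X + C (ε j))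
        = ∏ j : Fin n, (-X - C (ε j)) := by
          have e : ∀ j : Fin n, (-X - C (ε j) : K[X]) = (-1) * (X + C (ε j)) := fun j => by ring
          simp_rw [e]
          rw [Finset.prod_mul_distrib, Finset.prod_const, Finset.card_univ, Fintype.card_fin]
      _ = ∑ i ∈ Finset.range (n+1), C (h i) * ((-1:K[X]))^i * (X + C r) ^ i := by
          rw [this]
          refine Finset.sum_congr rfl fun i _ => ?_
          rw [show (-X - C r : K[X]) = (-1) * (X + C r) by ring, mul_pow]
          ring
  have h0 : h 0 = 0 := by simpa [hh] using hFr
  calc ∑ i ∈ Finset.range n, C ((-1 : K) ^ (i + 1 + n) / (Nat.factorial (i + 1) : K)) *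
          (X + C r) ^ i * C ((pder^[i+1] F).eval r)
      = ∑ i ∈ Finset.range n, C ((-1:K)^(i+1+n) * h (i+1)) * (X + C r)^i := by
        refine Finset.sum_congr rfl fun i _ => ?_
        rw [← key i]; ring
    _ = ∏ j ∈ univ.erase k, (X + C (ε j)) := ?_
  apply mul_left_cancel₀ (X_add_C_ne_zero r)
  have prodsplit : (X + C r) * ∏ j ∈ univ.erase k, (X + C (ε j)) =
      ∏ j : Fin n, (X + C (ε j)) := Finset.mul_prod_erase univ (fun j => X + C (ε j)) (mem_univ k)
  rw [prodsplit]
  have hsq : ((-1 : K[X])^n) * ((-1 : K[X])^n) = 1 := by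
    rw [← pow_add]; exact Even.neg_one_pow ⟨n, rfl⟩
  have expand : ∏ j : Fin n, (X + C (ε j)) =
      ∑ i ∈ Finset.range n, C ((-1:K)^(i+1+n) * h (i+1)) * (X + C r)^(i+1) := by
    calc ∏ j : Fin n, (X + C (ε j))
        = ((-1:K[X])^n) * (((-1:K[X])^n) * ∏ j : Fin n, (X + C (ε j))) := by
          rw [← mul_assoc, hsq, one_mul]
      _ = ((-1:K[X])^n) * ∑ i ∈ Finset.range (n+1), C (h i) * ((-1:K[X]))^i * (X + C r) ^ i := by
          rw [subst]
      _ = ∑ i ∈ Finset.range n, C ((-1:K)^(i+1+n) * h (i+1)) * (X + C r)^(i+1) := by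
          rw [Finset.mul_sum, Finset.sum_range_succ']
          simp only [h0, map_zero, zero_mul, mul_zero, add_zero, pow_zero, mul_one]
          refine Finset.sum_congr rfl fun i _ => ?_
          rw [map_mul, map_pow, map_neg, map_one, pow_add]
          ring
  rw [expand, Finset.mul_sum]
  refine Finset.sum_congr rfl fun i _ => ?_
  ring

/-- **Partial fraction / Taylor expansion identity** used in the computation of the
basis `ω̂(m)` at `z = 0`: with `F(z) = ∏_{i=1}^n (z - ε_i)`, `Δ(z) = ∏_{i=1}^s (z - ε_i)`
(`ε_1,…,ε_s` pairwise distinct),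
`∑_{k≤s} Δ'(ε_k)⁻¹ ∑_{i=0}^{n-1} ((-1)^{i+1+n}/(i+1)!) (x+ε_k)^i F^{(i+1)}(ε_k)
  = (-1)^{s+1} ∏_{i>s} (x+ε_i)` as polynomials in `x`. -/
theorem stmt_10 (K : Type*) [Field K] [CharZero K] (n s : ℕ) (hs : 1 ≤ s) (hsn : s ≤ n)
    (ε : Fin n → K)
    (hdist : ∀ i j : Fin n, (i : ℕ) < s → (j : ℕ) < s → i ≠ j → ε i ≠ ε j) :
    ∑ k ∈ Finset.univ.filter (fun k : Fin n => (k : ℕ) < s),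
        Polynomial.C
            (((pder (∏ i ∈ Finset.univ.filter (fun i : Fin n => (i : ℕ) < s),
                (Polynomial.X - Polynomial.C (ε i)))).eval (ε k))⁻¹) *
          ∑ i ∈ Finset.range n,
            Polynomial.C ((-1 : K) ^ (i + 1 + n) / (Nat.factorial (i + 1) : K)) *
              (Polynomial.X + Polynomial.C (ε k)) ^ i *
              Polynomial.C ((pder^[i + 1] (∏ j : Fin n, (Polynomial.X - Polynomial.C (ε j)))).eval (ε k)) =
      Polynomial.C ((-1 : K) ^ (s + 1)) *
        ∏ i ∈ Finset.univ.filter (fun i : Fin n => s ≤ (i : ℕ)),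
          (Polynomial.X + Polynomial.C (ε i)) := by
  classical
  classical
  set S : Finset (Fin n) := Finset.univ.filter (fun k : Fin n => (k : ℕ) < s) with hS
  set T : Finset (Fin n) := Finset.univ.filter (fun i : Fin n => s ≤ (i : ℕ)) with hT
  have hcard : S.card = s := by
    have himg : S = Finset.image (Fin.castLE hsn) Finset.univ := by
      ext j
      simp only [hS, Finset.mem_filter, Finset.mem_univ, true_and, Finset.mem_image]
      constructor
      · intro hj; exact ⟨⟨(j : ℕ), hj⟩, Fin.ext rfl⟩
      · rintro ⟨i, rfl⟩; exact i.isLt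
    rw [himg, Finset.card_image_of_injective _ (Fin.castLE_injective hsn),
      Finset.card_univ, Fintype.card_fin]
  have hder : ∀ k ∈ S, ((pder (∏ i ∈ S, (X - C (ε i)))).eval (ε k)) =
      ∏ j ∈ S.erase k, (ε k - ε j) := by
    intro k hk
    show (Polynomial.derivative (Lagrange.nodal S ε)).eval (ε k) = _
    rw [Lagrange.eval_nodal_derivative_eval_node_eq hk, Lagrange.eval_nodal]
  have hsplit : ∀ k ∈ S, (∏ j ∈ univ.erase k, (X + C (ε j)) : K[X]) =
      (∏ j ∈ S.erase k, (X + C (ε j))) * ∏ j ∈ T, (X + C (ε j)) := by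
    intro k hk
    have hks : (k : ℕ) < s := by simpa [hS] using hk
    rw [← Finset.prod_filter_mul_prod_filter_not (univ.erase k) (fun i => (i : ℕ) < s)]
    congr 1
    · apply Finset.prod_congr _ (fun _ _ => rfl)
      ext j
      simp only [hS, Finset.mem_filter, Finset.mem_erase, Finset.mem_univ, true_and, and_comm]
    · apply Finset.prod_congr _ (fun _ _ => rfl)
      ext j
      simp only [hT, Finset.mem_filter, Finset.mem_erase, Finset.mem_univ, true_and, not_lt]
      constructor
      · tauto
      · intro h2
        have hjk : j ≠ k := by rintro rfl; omega
        tauto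
  have hInj : Set.InjOn (fun j => -ε j) S := by
    intro a ha b hb hab
    by_contra hne
    exact hdist a b (by simpa [hS] using ha) (by simpa [hS] using hb) hne
      (neg_injective hab)
  have hSne : S.Nonempty := ⟨⟨0, lt_of_lt_of_le hs hsn⟩, by simp [hS]; omega⟩
  have hLag := Lagrange.sum_basis hInj hSne
  have hbasis : ∀ k ∈ S, Lagrange.basis S (fun j => -ε j) k =
      C (∏ j ∈ S.erase k, (ε j - ε k)⁻¹) * ∏ j ∈ S.erase k, (X + C (ε j)) := by
    intro k hk
    rw [Lagrange.basis]
    simp only [Lagrange.basisDivisor]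
    rw [Finset.prod_mul_distrib, map_prod]
    congr 1
    · exact Finset.prod_congr rfl fun j _ => by rw [neg_sub_neg]
    · exact Finset.prod_congr rfl fun j _ => by rw [map_neg, sub_neg_eq_add]
  have flip : ∀ k ∈ S, (∏ j ∈ S.erase k, (ε j - ε k)⁻¹) =
      (-1 : K) ^ (s - 1) * (∏ j ∈ S.erase k, (ε k - ε j))⁻¹ := by
    intro k hk
    have e : ∀ j : Fin n, (ε j - ε k)⁻¹ = (-1) * (ε k - ε j)⁻¹ := by
      intro j
      rw [← neg_sub, inv_neg]; ring
    simp_rw [e]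
    rw [Finset.prod_mul_distrib, Finset.prod_const, Finset.card_erase_of_mem hk, hcard,
      Finset.prod_inv_distrib]
  have h1 : (1 : K[X]) = ∑ k ∈ S,
      C ((-1 : K) ^ (s - 1) * (∏ j ∈ S.erase k, (ε k - ε j))⁻¹) *
        ∏ j ∈ S.erase k, (X + C (ε j)) := by
    rw [← hLag]
    refine Finset.sum_congr rfl fun k hk => ?_
    rw [hbasis k hk, flip k hk]
  have hconst : ∑ k ∈ S, C ((∏ j ∈ S.erase k, (ε k - ε j))⁻¹) *
      ∏ j ∈ S.erase k, (X + C (ε j)) = C ((-1 : K) ^ (s + 1)) := by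
    calc ∑ k ∈ S, C ((∏ j ∈ S.erase k, (ε k - ε j))⁻¹) * ∏ j ∈ S.erase k, (X + C (ε j))
        = C ((-1 : K) ^ (s + 1)) * ∑ k ∈ S,
            C ((-1 : K) ^ (s - 1) * (∏ j ∈ S.erase k, (ε k - ε j))⁻¹) *
              ∏ j ∈ S.erase k, (X + C (ε j)) := by
          rw [Finset.mul_sum]
          refine Finset.sum_congr rfl fun k hk => ?_
          rw [← mul_assoc, ← map_mul, ← mul_assoc, ← pow_add]
          have e2 : s + 1 + (s - 1) = 2 * s := by omega
          rw [e2, pow_mul]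
          norm_num
      _ = C ((-1 : K) ^ (s + 1)) := by rw [← h1, mul_one]
  calc ∑ k ∈ S, C (((pder (∏ i ∈ S, (X - C (ε i)))).eval (ε k))⁻¹) *
          ∑ i ∈ Finset.range n, C ((-1 : K) ^ (i + 1 + n) / (Nat.factorial (i + 1) : K)) *
            (X + C (ε k)) ^ i * C ((pder^[i + 1] (∏ j : Fin n, (X - C (ε j)))).eval (ε k))
      = ∑ k ∈ S, C ((∏ j ∈ S.erase k, (ε k - ε j))⁻¹) *
          ((∏ j ∈ S.erase k, (X + C (ε j))) * ∏ j ∈ T, (X + C (ε j))) := by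
        refine Finset.sum_congr rfl fun k hk => ?_
        rw [my_inner_sum ε k, hder k hk, hsplit k hk]
    _ = (∑ k ∈ S, C ((∏ j ∈ S.erase k, (ε k - ε j))⁻¹) *
          ∏ j ∈ S.erase k, (X + C (ε j))) * ∏ j ∈ T, (X + C (ε j)) := by
        rw [Finset.sum_mul]
        exact Finset.sum_congr rfl fun k hk => by ring
    _ = C ((-1 : K) ^ (s + 1)) * ∏ i ∈ T, (X + C (ε i)) := by rw [hconst]
end

section
/- Let A and B be finite multisets of real numbers, all of whose elements lie in the open interval (0,1), such that A is invariant under x ↦ 1−x (the multiset image of A under x ↦ 1−x equals A), B is invariant under x ↦ 1−x, and no element of B occurs in A. Then 2 · ∑_{b∈B} #{a ∈ A : a < b} = (card A) · (card B), where the sum and cardinalities count elements with multiplicity. -/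
open scoped Classical

/-- **Counting identity:** if `A` and `B` are finite multisets of reals in `(0,1)`,
each invariant under `x ↦ 1 - x`, and no element of `B` occurs in `A`, then
`2 ∑_{b ∈ B} #{a ∈ A : a < b} = (card A)(card B)`. -/
theorem stmt_11 (A B : Multiset ℝ)
    (hA01 : ∀ x ∈ A, 0 < x ∧ x < 1) (hB01 : ∀ x ∈ B, 0 < x ∧ x < 1)
    (hAinv : A.map (fun x => 1 - x) = A) (hBinv : B.map (fun x => 1 - x) = B)
    (hAB : ∀ x ∈ B, x ∉ A) :
    2 * (B.map fun b => Multiset.card (A.filter fun a => a < b)).sum =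
      Multiset.card A * Multiset.card B := by
  set g : ℝ → ℕ := fun b => Multiset.card (A.filter fun a => a < b) with hg
  have key : ∀ b ∈ B, g b + g (1 - b) = Multiset.card A := by
    intro b hb
    have h2 : g (1 - b) = Multiset.card (A.filter fun a => b < a) := by
      have : A.filter (fun a => a < 1 - b)
          = (A.map (fun x => 1 - x)).filter (fun a => a < 1 - b) := by rw [hAinv]
      rw [hg]
      simp only [this, Multiset.filter_map, Multiset.card_map]
      congr 1
      apply Multiset.filter_congr
      intro a _
      constructor <;> intro h <;> simp only [Function.comp] at * <;> linarith
    have hfc : (A.filter fun a => ¬ a < b) = (A.filter fun a => b < a) := by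
      apply Multiset.filter_congr
      intro a ha
      have hne : a ≠ b := fun h => hAB b hb (h ▸ ha)
      constructor <;> intro h
      · exact lt_of_le_of_ne (not_lt.mp h) (Ne.symm hne)
      · exact not_lt.mpr h.le
    have h3 : (A.filter fun a => a < b) + (A.filter fun a => b < a) = A := by
      rw [← hfc]; exact Multiset.filter_add_not (fun a => a < b) A
    have := congrArg Multiset.card h3
    rw [Multiset.card_add] at this
    rw [h2, hg]
    exact this
  have hsum : ((B.map g).sum : ℕ) + (B.map g).sum = Multiset.card A * Multiset.card B := by
    have heq : (B.map g).sum = (B.map (fun b => g (1 - b))).sum := by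
      conv_lhs => rw [← hBinv, Multiset.map_map]
      rfl
    nth_rewrite 2 [heq]
    rw [← Multiset.sum_map_add]
    calc (B.map fun b => g b + g (1 - b)).sum
        = (B.map fun _ => Multiset.card A).sum := by
          apply congrArg
          exact Multiset.map_congr rfl key
      _ = Multiset.card A * Multiset.card B := by
          simp [Multiset.map_const', mul_comm]
  rw [two_mul]
  convert hsum using 2
end

section
/- Let p be a prime and A a finite multiset of elements of ℤ_p such that the multiset image of A under the involution x ↦ 1 − x equals A. Then ( ∏_{a∈A} Γ_p(a) )^4 = 1, the product being taken with multiplicity. -/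
open Finset

/-- The square of the product of all units of a commutative monoid is 1. -/
lemma aux_units_sq {M : Type*} [CommMonoid M] [Fintype Mˣ] :
    (∏ u : Mˣ, u) ^ 2 = 1 := by
  have h : (∏ u : Mˣ, u⁻¹) = ∏ u : Mˣ, u :=
    Fintype.prod_equiv (Equiv.inv Mˣ) _ _ (fun x => rfl)
  rw [sq]
  nth_rewrite 2 [← h]
  rw [← Finset.prod_mul_distrib]
  exact Finset.prod_eq_one fun u _ => mul_inv_cancel u

/-- Wilson-type square lemma modulo `p^e`. -/
lemma aux_W_sq (p e : ℕ) (hp : p.Prime) (he : 0 < e) :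
    (∏ k ∈ Finset.Ico 1 (p ^ e), if p ∣ k then (1 : ZMod (p ^ e)) else (k : ZMod (p ^ e))) ^ 2
      = 1 := by
  haveI : Fact (1 < p ^ e) := ⟨Nat.one_lt_pow he.ne' hp.one_lt⟩
  have hcop : ∀ k : ℕ, ¬ p ∣ k → Nat.Coprime k (p ^ e) := fun k h =>
    Nat.Coprime.pow_right e (Nat.coprime_comm.mp (hp.coprime_iff_not_dvd.mpr h))
  have h1 : (∏ k ∈ Finset.Ico 1 (p ^ e), if p ∣ k then (1 : ZMod (p ^ e)) else (k : ZMod (p ^ e)))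
      = ∏ k ∈ (Finset.Ico 1 (p ^ e)).filter (fun k => ¬ p ∣ k), (k : ZMod (p ^ e)) := by
    rw [Finset.prod_filter]
    exact Finset.prod_congr rfl fun k _ => by split_ifs with h1 h2 <;> tauto
  have h2 : ∏ k ∈ (Finset.Ico 1 (p ^ e)).filter (fun k => ¬ p ∣ k), (k : ZMod (p ^ e))
      = ((∏ u : (ZMod (p ^ e))ˣ, u : (ZMod (p ^ e))ˣ) : ZMod (p ^ e)) := by
    rw [show ((∏ u : (ZMod (p ^ e))ˣ, u : (ZMod (p ^ e))ˣ) : ZMod (p ^ e))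
        = ∏ u : (ZMod (p ^ e))ˣ, (u : ZMod (p ^ e)) from map_prod (Units.coeHom _) _ _]
    refine Finset.prod_bij (fun k hk => ZMod.unitOfCoprime k
      (hcop k (Finset.mem_filter.mp hk).2)) (fun a ha => Finset.mem_univ _) ?_ ?_ ?_
    · intro a ha b hb hab
      have hcast : ((a : ℕ) : ZMod (p ^ e)) = ((b : ℕ) : ZMod (p ^ e)) := by
        have h' := congrArg (fun u : (ZMod (p ^ e))ˣ => (u : ZMod (p ^ e))) hab
        simpa [ZMod.coe_unitOfCoprime] using h'
      have ha' := (Finset.mem_Ico.mp (Finset.mem_filter.mp ha).1).2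
      have hb' := (Finset.mem_Ico.mp (Finset.mem_filter.mp hb).1).2
      calc a = ((a : ℕ) : ZMod (p ^ e)).val := (ZMod.val_cast_of_lt ha').symm
        _ = ((b : ℕ) : ZMod (p ^ e)).val := by rw [hcast]
        _ = b := ZMod.val_cast_of_lt hb'
    · intro u _
      have hu0 : (u : ZMod (p ^ e)) ≠ 0 := by
        intro h
        have h1 := u.mul_inv
        rw [h, zero_mul] at h1
        exact zero_ne_one h1
      refine ⟨(u : ZMod (p ^ e)).val, ?_, ?_⟩
      · refine Finset.mem_filter.mpr ⟨Finset.mem_Ico.mpr ⟨?_, ZMod.val_lt _⟩, ?_⟩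
        · rw [Nat.one_le_iff_ne_zero]
          intro h
          exact hu0 ((ZMod.val_eq_zero _).mp h)
        · intro hdvd
          have hc := ZMod.val_coe_unit_coprime u
          have hd1 : p ∣ Nat.gcd (u : ZMod (p ^ e)).val (p ^ e) :=
            Nat.dvd_gcd hdvd (dvd_pow_self p he.ne')
          rw [hc] at hd1
          exact hp.not_dvd_one hd1
      · apply Units.ext
        rw [ZMod.coe_unitOfCoprime]
        exact ZMod.natCast_rightInverse _
    · intro a ha
      exact (ZMod.coe_unitOfCoprime a (hcop a (Finset.mem_filter.mp ha).2)).symm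
  rw [h1, h2, ← Units.val_pow_eq_pow_val, aux_units_sq, Units.val_one]


/-- Reindexing `k ↦ q - k` for the squared factors. -/
lemma aux_reindex (p q n : ℕ) (hpq : p ∣ q) (hnq : n ≤ q) :
    ∏ k ∈ Finset.Ico 1 (q + 1 - n), ((if p ∣ k then (1 : ZMod q) else (k : ZMod q)) ^ 2)
      = ∏ k ∈ Finset.Ico n q, ((if p ∣ k then (1 : ZMod q) else (k : ZMod q)) ^ 2) := by
  refine Finset.prod_nbij' (fun k => q - k) (fun k => q - k) ?_ ?_ ?_ ?_ ?_ <;>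
    intro a ha <;> rw [Finset.mem_Ico] at ha
  · rw [Finset.mem_Ico]; omega
  · rw [Finset.mem_Ico]; omega
  · omega
  · omega
  · have haq : a ≤ q := by omega
    have hdvd : p ∣ (q - a) ↔ p ∣ a := by
      constructor
      · intro h
        have h2 : a = q - (q - a) := by omega
        rw [h2]
        exact Nat.dvd_sub hpq h
      · exact fun h => Nat.dvd_sub hpq h
    have hcast : ((q - a : ℕ) : ZMod q) = -(a : ZMod q) := by
      rw [Nat.cast_sub haq]
      simp [ZMod.natCast_self]
    by_cases hpa : p ∣ a
    · rw [if_pos hpa, if_pos (hdvd.mpr hpa)]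
    · rw [if_neg hpa, if_neg (fun h => hpa (hdvd.mp h)), hcast]
      ring

/-- Key reflection congruence modulo `p^e`. -/
lemma aux_key (p e n : ℕ) (hp : p.Prime) (he : 0 < e) (hn : 0 < n) (hnq : n ≤ p ^ e) :
    ((∏ k ∈ Finset.Ico 1 n, if p ∣ k then (1 : ZMod (p ^ e)) else (k : ZMod (p ^ e))) *
     (∏ k ∈ Finset.Ico 1 (p ^ e + 1 - n),
        if p ∣ k then (1 : ZMod (p ^ e)) else (k : ZMod (p ^ e)))) ^ 2 = 1 := by
  have hpq : p ∣ p ^ e := dvd_pow_self p he.ne'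
  have h1 : (∏ k ∈ Finset.Ico 1 (p ^ e + 1 - n),
        if p ∣ k then (1 : ZMod (p ^ e)) else (k : ZMod (p ^ e))) ^ 2
      = (∏ k ∈ Finset.Ico n (p ^ e),
        if p ∣ k then (1 : ZMod (p ^ e)) else (k : ZMod (p ^ e))) ^ 2 := by
    rw [← Finset.prod_pow, aux_reindex p (p ^ e) n hpq hnq, Finset.prod_pow]
  have h2 : (∏ k ∈ Finset.Ico 1 n, if p ∣ k then (1 : ZMod (p ^ e)) else (k : ZMod (p ^ e))) *
      (∏ k ∈ Finset.Ico n (p ^ e), if p ∣ k then (1 : ZMod (p ^ e)) else (k : ZMod (p ^ e)))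
      = ∏ k ∈ Finset.Ico 1 (p ^ e), if p ∣ k then (1 : ZMod (p ^ e)) else (k : ZMod (p ^ e)) :=
    Finset.prod_Ico_consecutive _ hn hnq
  rw [mul_pow, h1, ← mul_pow, h2]
  exact aux_W_sq p e hp he

/-- Pointwise reflection: `(Γ x * Γ (1 - x))² = 1`. -/
lemma aux_refl (p : ℕ) [hp : Fact p.Prime]
    (Γ : ℤ_[p] → ℤ_[p]) (hΓc : Continuous Γ)
    (hΓ : ∀ n : ℕ, 0 < n →
      Γ (n : ℤ_[p]) = (-1 : ℤ_[p]) ^ n * ∏ k ∈ Finset.Ico 1 n, if p ∣ k then 1 else (k : ℤ_[p]))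
    (x : ℤ_[p]) : (Γ x * Γ (1 - x)) ^ 2 = 1 := by
  have hp1 : 1 < p := hp.out.one_lt
  -- approximating sequences
  set N : ℕ → ℕ := fun e => x.appr (e + 1) + p ^ (e + 1) with hN
  set E : ℕ → ℕ := fun e => 2 * (e + 1) with hE
  set M : ℕ → ℕ := fun e => p ^ E e + 1 - N e with hM
  have hNpos : ∀ e, 0 < N e := fun e => Nat.lt_of_lt_of_le (Nat.pow_pos hp.out.pos)
    (Nat.le_add_left _ _)
  have hNle : ∀ e, N e ≤ p ^ E e := by
    intro e
    have h1 : x.appr (e + 1) < p ^ (e + 1) := x.appr_lt _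
    have h2 : 2 ≤ p ^ (e + 1) := le_trans hp1 (Nat.le_self_pow (Nat.succ_ne_zero e) p)
    have h3 : p ^ E e = p ^ (e + 1) * p ^ (e + 1) := by
      rw [hE, ← pow_add]; ring_nf
    have h4 : 2 * p ^ (e + 1) ≤ p ^ (e + 1) * p ^ (e + 1) := Nat.mul_le_mul_right _ h2
    have h5 : 2 * p ^ (e + 1) ≤ p ^ E e := h3 ▸ h4
    simp only [hN]
    omega
  have hMpos : ∀ e, 0 < M e := by
    intro e
    have := hNle e
    simp only [hM]
    omega
  -- norm bounds for the approximations
  have hNnorm : ∀ e, ‖x - (N e : ℤ_[p])‖ ≤ (p : ℝ) ^ (-((e + 1 : ℕ)) : ℤ) := by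
    intro e
    rw [PadicInt.norm_le_pow_iff_mem_span_pow]
    have h1 := x.appr_spec (e + 1)
    have h2 : ((p ^ (e + 1) : ℕ) : ℤ_[p]) ∈ (Ideal.span {(p : ℤ_[p]) ^ (e + 1)} : Ideal ℤ_[p]) := by
      rw [Ideal.mem_span_singleton]
      push_cast
      rfl
    have : x - (N e : ℤ_[p]) = (x - (x.appr (e + 1) : ℤ_[p])) - ((p ^ (e + 1) : ℕ) : ℤ_[p]) := by
      simp only [hN]
      push_cast
      ring
    rw [this]
    exact sub_mem h1 h2
  have hMnorm : ∀ e, ‖(1 - x) - (M e : ℤ_[p])‖ ≤ (p : ℝ) ^ (-((e + 1 : ℕ)) : ℤ) := by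
    intro e
    rw [PadicInt.norm_le_pow_iff_mem_span_pow]
    have hcast : ((M e : ℕ) : ℤ_[p]) = ((p ^ E e : ℕ) : ℤ_[p]) + 1 - (N e : ℤ_[p]) := by
      simp only [hM]
      rw [Nat.cast_sub (by have := hNle e; omega)]
      push_cast
      ring
    have h2 : ((p ^ E e : ℕ) : ℤ_[p]) ∈ (Ideal.span {(p : ℤ_[p]) ^ (e + 1)} : Ideal ℤ_[p]) := by
      rw [Ideal.mem_span_singleton]
      push_cast
      exact pow_dvd_pow _ (by simp only [hE]; omega)
    have h1 : (N e : ℤ_[p]) - x ∈ (Ideal.span {(p : ℤ_[p]) ^ (e + 1)} : Ideal ℤ_[p]) := by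
      have := (PadicInt.norm_le_pow_iff_mem_span_pow (x - (N e : ℤ_[p])) (e + 1)).mp (hNnorm e)
      have h3 : (N e : ℤ_[p]) - x = -(x - (N e : ℤ_[p])) := by ring
      rw [h3]
      exact neg_mem this
    have : (1 - x) - (M e : ℤ_[p]) = ((N e : ℤ_[p]) - x) - ((p ^ E e : ℕ) : ℤ_[p]) := by
      rw [hcast]; ring
    rw [this]
    exact sub_mem h1 h2
  -- the congruence at each stage
  have hcong : ∀ e, ‖(Γ (N e : ℤ_[p]) * Γ (M e : ℤ_[p])) ^ 2 - 1‖ ≤ (p : ℝ) ^ (-(E e) : ℤ) := by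
    intro e
    rw [PadicInt.norm_le_pow_iff_mem_span_pow, ← PadicInt.ker_toZModPow, RingHom.mem_ker]
    have hmap : ∀ n : ℕ, 0 < n → (PadicInt.toZModPow (E e)) (Γ (n : ℤ_[p]))
        = (-1 : ZMod (p ^ E e)) ^ n *
          ∏ k ∈ Finset.Ico 1 n, if p ∣ k then (1 : ZMod (p ^ E e)) else (k : ZMod (p ^ E e)) := by
      intro n hn
      rw [hΓ n hn, map_mul, map_pow, map_neg, map_one, map_prod]
      simp only [apply_ite (PadicInt.toZModPow (E e)), map_one, map_natCast]
    rw [map_sub, map_one, map_pow, map_mul, hmap _ (hNpos e), hmap _ (hMpos e)]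
    have key := aux_key p (E e) (N e) hp.out (by simp only [hE]; omega) (hNpos e) (hNle e)
    have hMeq : M e = p ^ E e + 1 - N e := rfl
    rw [sub_eq_zero]
    have hsq : ∀ (a b : ZMod (p ^ E e)) (i j : ℕ),
        (((-1 : ZMod (p ^ E e)) ^ i * a) * ((-1) ^ j * b)) ^ 2
          = ((-1 : ZMod (p ^ E e)) ^ (i + j)) ^ 2 * (a * b) ^ 2 := by
      intros a b i j
      rw [pow_add]
      ring
    rw [hsq]
    have hs : ((-1 : ZMod (p ^ E e)) ^ (N e + M e)) ^ 2 = 1 := by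
      rw [pow_right_comm, neg_one_sq, one_pow]
    rw [hs, one_mul, hMeq]
    exact key
  -- pass to the limit
  have htendNorm : Filter.Tendsto (fun e : ℕ => ((p : ℝ)⁻¹) ^ (e + 1)) Filter.atTop (nhds 0) := by
    refine (tendsto_pow_atTop_nhds_zero_of_lt_one (by positivity) ?_).comp
      (Filter.tendsto_add_atTop_nat 1)
    have h1p : (1 : ℝ) < p := by exact_mod_cast hp1
    exact inv_lt_one_of_one_lt₀ h1p
  have hzpow : ∀ e : ℕ, ((p : ℝ)) ^ (-((e + 1 : ℕ)) : ℤ) = ((p : ℝ)⁻¹) ^ (e + 1) := by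
    intro e
    rw [zpow_neg, inv_pow]
    norm_cast
  have htendN : Filter.Tendsto (fun e : ℕ => ((N e : ℕ) : ℤ_[p])) Filter.atTop (nhds x) := by
    rw [tendsto_iff_norm_sub_tendsto_zero]
    refine squeeze_zero (fun e => norm_nonneg _) (fun e => ?_) htendNorm
    rw [← hzpow e, ← norm_neg]
    have : -(((N e : ℕ) : ℤ_[p]) - x) = x - (N e : ℤ_[p]) := by ring
    rw [this]
    exact hNnorm e
  have htendM : Filter.Tendsto (fun e : ℕ => ((M e : ℕ) : ℤ_[p])) Filter.atTop
      (nhds (1 - x)) := by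
    rw [tendsto_iff_norm_sub_tendsto_zero]
    refine squeeze_zero (fun e => norm_nonneg _) (fun e => ?_) htendNorm
    rw [← hzpow e, ← norm_neg]
    have : -(((M e : ℕ) : ℤ_[p]) - (1 - x)) = (1 - x) - (M e : ℤ_[p]) := by ring
    rw [this]
    exact hMnorm e
  have htend1 : Filter.Tendsto (fun e : ℕ => (Γ (N e : ℤ_[p]) * Γ (M e : ℤ_[p])) ^ 2)
      Filter.atTop (nhds ((Γ x * Γ (1 - x)) ^ 2)) :=
    (((hΓc.tendsto x).comp htendN).mul ((hΓc.tendsto (1 - x)).comp htendM)).pow 2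
  have htend2 : Filter.Tendsto (fun e : ℕ => (Γ (N e : ℤ_[p]) * Γ (M e : ℤ_[p])) ^ 2)
      Filter.atTop (nhds 1) := by
    rw [tendsto_iff_norm_sub_tendsto_zero]
    refine squeeze_zero (fun e => norm_nonneg _) (fun e => le_trans (hcong e) ?_) htendNorm
    rw [← hzpow e]
    apply zpow_le_zpow_right₀ (by exact_mod_cast hp1.le)
    simp only [hE]
    push_cast
    omega
  exact tendsto_nhds_unique htend1 htend2

/-- **Reflection-type consequence for `Γ_p`:** if a finite multiset `A ⊆ ℤ_p` is
invariant under `x ↦ 1 - x`, then `(∏_{a ∈ A} Γ_p(a))⁴ = 1`. -/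
theorem stmt_16 (p : ℕ) [Fact p.Prime]
    (Γ : ℤ_[p] → ℤ_[p]) (hΓc : Continuous Γ)
    (hΓ : ∀ n : ℕ, 0 < n →
      Γ (n : ℤ_[p]) = (-1 : ℤ_[p]) ^ n * ∏ k ∈ Finset.Ico 1 n, if p ∣ k then 1 else (k : ℤ_[p]))
    (A : Multiset ℤ_[p]) (hA : A.map (fun a => 1 - a) = A) :
    ((A.map Γ).prod) ^ 4 = 1 := by
  have hrefl := aux_refl p Γ hΓc hΓ
  have h2 : ((A.map Γ).prod) ^ 2 = (A.map (fun a => Γ a * Γ (1 - a))).prod := by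
    rw [sq]
    nth_rewrite 2 [← hA]
    rw [Multiset.map_map, ← Multiset.prod_map_mul]
    rfl
  calc ((A.map Γ).prod) ^ 4 = (((A.map Γ).prod) ^ 2) ^ 2 := by ring
    _ = ((A.map (fun a => Γ a * Γ (1 - a))).prod) ^ 2 := by rw [h2]
    _ = (A.map (fun a => (Γ a * Γ (1 - a)) * (Γ a * Γ (1 - a)))).prod := by
        rw [sq, ← Multiset.prod_map_mul]
    _ = (A.map (fun a => (1 : ℤ_[p]))).prod := by
        refine congrArg Multiset.prod (Multiset.map_congr rfl fun a _ => ?_)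
        rw [← sq]
        exact hrefl a
    _ = 1 := by simp
end
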